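/- arXiv:2603.12006 — 2 statements merged into one kernel-verified Lean document; each statement's English description precedes it below -/
import Mathlib

section
/- For every n ≥ 2 and every non-corner vertex x ∈ V_{SG_n}, the graph Laplacian of the distance-to-corners function satisfies Δ_n d_n(x) = 8 − 3·id_n(x). -/
open scoped Classical BigOperators ENNReal

noncomputable section

/-- Points of the plane. -/
abbrev Pt : Type := ℝ × ℝ

/-- Bottom-left corner `A`. -/
def u1 : Pt := (0, 0)
/-- Top corner `C`. -/
def u2 : Pt := (1/2, Real.sqrt 3 / 2)
/-- Bottom-right corner `B`. -/
def u3 : Pt := (1, 0)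

/-- The three corners of the gasket. -/
def corners : Set Pt := {u1, u2, u3}

/-- Vertex set of the `n`-th Sierpinski gasket approximation graph `SG_n`. -/
def V : ℕ → Set Pt
  | 0 => {u1, u2, u3}
  | n + 1 =>
      (fun p : Pt => (2:ℝ)⁻¹ • p) ''
        (V n ∪ (fun p => u2 + p) '' V n ∪ (fun p => u3 + p) '' V n)

/-- Edge set (as ordered pairs) of `SG_n`. -/
def Ed : ℕ → Set (Pt × Pt)
  | 0 => {(u1, u2), (u2, u3), (u1, u3)}
  | n + 1 =>
      (fun q : Pt × Pt => ((2:ℝ)⁻¹ • q.1, (2:ℝ)⁻¹ • q.2)) ''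
        (Ed n ∪ (fun q : Pt × Pt => (u2 + q.1, u2 + q.2)) '' Ed n ∪
          (fun q : Pt × Pt => (u3 + q.1, u3 + q.2)) '' Ed n)

/-- The `n`-th Sierpinski gasket approximation graph, as a simple graph on the plane
(vertices outside `V n` are isolated). -/
def SG (n : ℕ) : SimpleGraph Pt where
  Adj x y := ((x, y) ∈ Ed n ∨ (y, x) ∈ Ed n) ∧ x ≠ y
  symm := ⟨fun x y h => ⟨h.1.symm, h.2.symm⟩⟩
  loopless := ⟨fun _ h => h.2 rfl⟩

/-- Graph distance on `SG_n`. -/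
def gdist (n : ℕ) (x y : Pt) : ℕ := (SG n).dist x y

/-- `d_n x`: graph distance from `x` to the nearest corner of `SG_n`. -/
def dcorner (n : ℕ) (x : Pt) : ℕ :=
  min (gdist n x u1) (min (gdist n x u2) (gdist n x u3))

/-- Graph Laplacian of `SG_n` at a (non-corner, degree 4) vertex `x`:
`Δ_n f x = 4 f x - ∑_{y ∼ x} f y`. -/
def lap (n : ℕ) (f : Pt → ℝ) (x : Pt) : ℝ :=
  4 * f x - ∑ᶠ (y : Pt) (_ : (SG n).Adj x y), f y

/-- `g : Pt → Pt → ℝ` is the Green function of `SG_n` (stopped at the corners):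
it vanishes whenever one argument is a corner, and for every non-corner vertex `y`
the function `x ↦ g x y` has Laplacian `δ_y` at every non-corner vertex `x`. -/
def IsGreen (n : ℕ) (g : Pt → Pt → ℝ) : Prop :=
  (∀ x y : Pt, x ∈ corners ∨ y ∈ corners → g x y = 0) ∧
    ∀ y ∈ V n, y ∉ corners → ∀ x ∈ V n, x ∉ corners →
      lap n (fun z => g z y) x = if x = y then 1 else 0

/-- `h_n x = ∑_{y ∈ V_{SG_n}} g_n(x,y)`. -/
def hfun (n : ℕ) (g : Pt → Pt → ℝ) (x : Pt) : ℝ := ∑ᶠ y ∈ V n, g x y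

/-- Green convolution `(g_n * σ)(x) = ∑_{y ∈ V_{SG_n}} g_n(x,y) σ(y)`. -/
def conv (n : ℕ) (g : Pt → Pt → ℝ) (σ : Pt → ℕ) (x : Pt) : ℝ :=
  ∑ᶠ y ∈ V n, g x y * (σ y : ℝ)

/-- Midpoint of side `AB`. -/
def mAB : Pt := (2:ℝ)⁻¹ • (u1 + u3)
/-- Midpoint of side `BC`. -/
def mBC : Pt := (2:ℝ)⁻¹ • (u3 + u2)
/-- Midpoint of side `CA`. -/
def mCA : Pt := (2:ℝ)⁻¹ • (u2 + u1)

/-- The recursively defined sandpile configurations `M_n(a,b,c)` on `SG_n`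
(value `0` off the vertex set, and junk at level `0`). -/
def M : ℕ → ℕ → ℕ → ℕ → Pt → ℕ
  | 0, _, _, _, _ => 0
  | 1, a, b, c, x =>
      if x = u1 then a else if x = u3 then b else if x = u2 then c
      else if x = mAB then 3 else if x = mBC then 2 else if x = mCA then 3 else 0
  | n + 2, a, b, c, x =>
      if x = u1 then a else if x = u3 then b else if x = u2 then c
      else if x = mAB then 3 else if x = mBC then 2 else if x = mCA then 3
      else if (2:ℝ) • x ∈ V (n+1) then M (n+1) a 3 3 ((2:ℝ) • x)
      else if (2:ℝ) • x - u3 ∈ V (n+1) then M (n+1) 3 b 2 ((2:ℝ) • x - u3)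
      else if (2:ℝ) • x - u2 ∈ V (n+1) then M (n+1) 3 2 c ((2:ℝ) • x - u2)
      else 0

/-- Centroid of the three corners. -/
def ctr : Pt := (3:ℝ)⁻¹ • (u1 + u2 + u3)

/-- Rotation of the plane by 120° counterclockwise about the centroid. -/
def rotccw (x : Pt) : Pt :=
  (ctr.1 - (x.1 - ctr.1) / 2 - Real.sqrt 3 / 2 * (x.2 - ctr.2),
   ctr.2 + Real.sqrt 3 / 2 * (x.1 - ctr.1) - (x.2 - ctr.2) / 2)

/-- Rotation of the plane by 120° clockwise about the centroid. -/
def rotcw (x : Pt) : Pt :=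
  (ctr.1 - (x.1 - ctr.1) / 2 + Real.sqrt 3 / 2 * (x.2 - ctr.2),
   ctr.2 - Real.sqrt 3 / 2 * (x.1 - ctr.1) - (x.2 - ctr.2) / 2)

/-- The sandpile identity `id_n` on `SG_n` for `n ≥ 2` (junk `0` for `n ≤ 1` and off the
vertex set): value `2` at the corners and side midpoints, the configuration `M_{n-1}(2,2,2)`
rescaled on the bottom-left copy, its clockwise 120° rotation on the top copy, and its
counterclockwise 120° rotation on the bottom-right copy. -/
def sandId : ℕ → Pt → ℕ
  | 0, _ => 0
  | 1, _ => 0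
  | m + 2, x =>
      if x = u1 ∨ x = u2 ∨ x = u3 ∨ x = mAB ∨ x = mBC ∨ x = mCA then 2
      else if (2:ℝ) • x ∈ V (m+1) then M (m+1) 2 2 2 ((2:ℝ) • x)
      else if (2:ℝ) • x - u2 ∈ V (m+1) then M (m+1) 2 2 2 (rotccw ((2:ℝ) • x - u2))
      else if (2:ℝ) • x - u3 ∈ V (m+1) then M (m+1) 2 2 2 (rotcw ((2:ℝ) • x - u3))
      else 0

/-- `V_* = ⋃_n V_{SG_n}`. -/
def Vstar : Set Pt := ⋃ n, V n

/-- The Sierpinski gasket: the closure of `V_*` in the plane. -/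
def SGset : Set Pt := closure Vstar

/-- Euclidean distance on the plane. -/
def eud (x y : Pt) : ℝ := Real.sqrt ((x.1 - y.1) ^ 2 + (x.2 - y.2) ^ 2)

/-- The point of `V n` nearest to `x` in Euclidean distance, ties resolved by taking the
rightmost (largest first coordinate) minimizer. -/
def nearest (n : ℕ) (x : Pt) : Pt :=
  if h : ∃ y ∈ V n, (∀ z ∈ V n, eud x y ≤ eud x z) ∧
      ∀ z ∈ V n, eud x z = eud x y → z.1 ≤ y.1
  then h.choose else x

/-- Piecewise constant continuation `f^▲` of a function on `V n` to the gasket. -/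
def ext (n : ℕ) (f : Pt → ℝ) (x : Pt) : ℝ := f (nearest n x)

/-- Arc length (total variation w.r.t. the Euclidean distance) of a curve
`γ : [0,1] → ℝ²`. -/
def pathLen (γ : ℝ → Pt) : ℝ≥0∞ :=
  ⨆ p : ℕ × {u : ℕ → ℝ // Monotone u ∧ ∀ i, u i ∈ Set.Icc (0:ℝ) 1},
    ∑ i ∈ Finset.range p.1, ENNReal.ofReal (eud (γ (p.2.1 (i + 1))) (γ (p.2.1 i)))

/-- Intrinsic (shortest-path) distance between `x` and `y` through the gasket. -/
def intrinsicD (x y : Pt) : ℝ≥0∞ :=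
  ⨅ (γ : ℝ → Pt) (_ : ContinuousOn γ (Set.Icc 0 1)) (_ : γ 0 = x) (_ : γ 1 = y)
    (_ : Set.MapsTo γ (Set.Icc 0 1) SGset), pathLen γ

/-- `d(x)`: intrinsic shortest-path distance in the gasket from `x` to the nearest corner. -/
def dSG (x : Pt) : ℝ :=
  (min (intrinsicD x u1) (min (intrinsicD x u2) (intrinsicD x u3))).toReal

-- ======== auxiliary development ========


lemma s3_sq : Real.sqrt 3 ^ 2 = 3 := Real.sq_sqrt (by norm_num)
lemma s3_pos : 0 < Real.sqrt 3 := Real.sqrt_pos.2 (by norm_num)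

/-- copy maps -/
def ph1 (x : Pt) : Pt := (2:ℝ)⁻¹ • x
def ph2 (x : Pt) : Pt := (2:ℝ)⁻¹ • (u3 + x)
def ph3 (x : Pt) : Pt := (2:ℝ)⁻¹ • (u2 + x)

lemma ph1_def (x : Pt) : ph1 x = (x.1/2, x.2/2) := by
  simp [ph1, Prod.ext_iff, Prod.smul_fst, Prod.smul_snd, smul_eq_mul]; constructor <;> ring
lemma ph2_def (x : Pt) : ph2 x = ((1+x.1)/2, x.2/2) := by
  simp [ph2, u3, Prod.ext_iff, Prod.smul_fst, Prod.smul_snd, smul_eq_mul]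
  constructor <;> ring
lemma ph3_def (x : Pt) : ph3 x = ((1/2+x.1)/2, (Real.sqrt 3/2+x.2)/2) := by
  simp [ph3, u2, Prod.ext_iff, Prod.smul_fst, Prod.smul_snd, smul_eq_mul]
  constructor <;> ring

lemma dbl_ph1 (x : Pt) : (2:ℝ) • ph1 x = x := smul_inv_smul₀ two_ne_zero x
lemma dbl_ph2 (x : Pt) : (2:ℝ) • ph2 x = u3 + x := smul_inv_smul₀ two_ne_zero _
lemma dbl_ph3 (x : Pt) : (2:ℝ) • ph3 x = u2 + x := smul_inv_smul₀ two_ne_zero _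
lemma ph1_inj : Function.Injective ph1 := fun a b h => by
  have := congrArg (fun p : Pt => (2:ℝ) • p) h; simpa [dbl_ph1] using this
lemma ph2_inj : Function.Injective ph2 := fun a b h => by
  have := congrArg (fun p : Pt => (2:ℝ) • p) h
  simp only [dbl_ph2] at this; exact add_left_cancel this
lemma ph3_inj : Function.Injective ph3 := fun a b h => by
  have := congrArg (fun p : Pt => (2:ℝ) • p) h
  simp only [dbl_ph3] at this; exact add_left_cancel this

lemma V_succ (n : ℕ) : V (n+1) = ph1 '' V n ∪ ph3 '' V n ∪ ph2 '' V n := by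
  show (fun p : Pt => (2:ℝ)⁻¹ • p) '' _ = _
  rw [Set.image_union, Set.image_union, Set.image_image, Set.image_image]
  rfl

lemma mem_V1 {n : ℕ} {z : Pt} (h : z ∈ V n) : ph1 z ∈ V (n+1) := by
  rw [V_succ]; exact Or.inl (Or.inl ⟨z, h, rfl⟩)
lemma mem_V3 {n : ℕ} {z : Pt} (h : z ∈ V n) : ph3 z ∈ V (n+1) := by
  rw [V_succ]; exact Or.inl (Or.inr ⟨z, h, rfl⟩)
lemma mem_V2 {n : ℕ} {z : Pt} (h : z ∈ V n) : ph2 z ∈ V (n+1) := by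
  rw [V_succ]; exact Or.inr ⟨z, h, rfl⟩

lemma cases_V {n : ℕ} {x : Pt} (h : x ∈ V (n+1)) :
    (∃ z ∈ V n, x = ph1 z) ∨ (∃ z ∈ V n, x = ph3 z) ∨ (∃ z ∈ V n, x = ph2 z) := by
  rw [V_succ] at h
  rcases h with (⟨z, hz, rfl⟩ | ⟨z, hz, rfl⟩) | ⟨z, hz, rfl⟩
  · exact Or.inl ⟨z, hz, rfl⟩
  · exact Or.inr (Or.inl ⟨z, hz, rfl⟩)
  · exact Or.inr (Or.inr ⟨z, hz, rfl⟩)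

/-- triangle invariant -/
def T : Set Pt := {x | 0 ≤ x.2 ∧ x.2 ≤ Real.sqrt 3 * x.1 ∧ x.2 ≤ Real.sqrt 3 * (1 - x.1)}

lemma u1_mem_T : u1 ∈ T := by simp [T, u1]
lemma u2_mem_T : u2 ∈ T := by
  have := s3_pos
  refine ⟨by simp [u2]; positivity, by simp [u2]; nlinarith, by simp [u2]; nlinarith⟩
lemma u3_mem_T : u3 ∈ T := by simp [T, u3]

lemma T_ph1 {x : Pt} (h : x ∈ T) : ph1 x ∈ T := by
  obtain ⟨h1, h2, h3⟩ := h; have := s3_pos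
  rw [ph1_def]; refine ⟨by linarith, by simp; nlinarith, by simp; nlinarith⟩
lemma T_ph2 {x : Pt} (h : x ∈ T) : ph2 x ∈ T := by
  obtain ⟨h1, h2, h3⟩ := h; have := s3_pos
  rw [ph2_def]; refine ⟨by linarith, by simp; nlinarith, by simp; nlinarith⟩
lemma T_ph3 {x : Pt} (h : x ∈ T) : ph3 x ∈ T := by
  obtain ⟨h1, h2, h3⟩ := h; have := s3_pos
  rw [ph3_def]; refine ⟨by linarith, by simp; nlinarith, by simp; nlinarith⟩

lemma V_subset_T : ∀ n, V n ⊆ T := by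
  intro n; induction n with
  | zero =>
    intro x hx
    rcases hx with rfl | rfl | rfl
    exacts [u1_mem_T, u2_mem_T, u3_mem_T]
  | succ n ih =>
    intro x hx
    rcases cases_V hx with ⟨z, hz, rfl⟩ | ⟨z, hz, rfl⟩ | ⟨z, hz, rfl⟩
    exacts [T_ph1 (ih hz), T_ph3 (ih hz), T_ph2 (ih hz)]

lemma T_cap2 {a : Pt} (ha : a ∈ T) (h : u2 + a ∈ T) : a = u1 := by
  obtain ⟨h1, h2, h3⟩ := ha
  obtain ⟨g1, g2, g3⟩ := h
  simp only [u2, Prod.fst_add, Prod.snd_add] at g3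
  have := s3_pos
  have ha1 : a.1 = 0 := by nlinarith
  have ha2 : a.2 = 0 := by nlinarith
  simp [u1, Prod.ext_iff, ha1, ha2]
lemma T_cap3 {a : Pt} (ha : a ∈ T) (h : u3 + a ∈ T) : a = u1 := by
  obtain ⟨h1, h2, h3⟩ := ha
  obtain ⟨g1, g2, g3⟩ := h
  simp only [u3, Prod.fst_add, Prod.snd_add] at g3
  have := s3_pos
  have ha1 : a.1 = 0 := by nlinarith
  have ha2 : a.2 = 0 := by nlinarith
  simp [u1, Prod.ext_iff, ha1, ha2]
lemma T_cap23 {a b : Pt} (ha : a ∈ T) (hb : b ∈ T) (h : u2 + a = u3 + b) :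
    a = u3 ∧ b = u2 := by
  obtain ⟨h1, h2, h3⟩ := ha
  obtain ⟨g1, g2, g3⟩ := hb
  have e1 : 1/2 + a.1 = 1 + b.1 := by
    have := congrArg Prod.fst h; simpa [u2, u3] using this
  have e2 : Real.sqrt 3/2 + a.2 = b.2 := by
    have := congrArg Prod.snd h; simpa [u2, u3] using this
  have := s3_pos
  have ha1 : a.1 = 1 := by nlinarith
  have ha2 : a.2 = 0 := by nlinarith
  constructor
  · simp [u3, Prod.ext_iff, ha1, ha2]
  · simp [u2, Prod.ext_iff]
    constructor <;> nlinarith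
lemma Ed_succ (n : ℕ) : Ed (n+1) =
    (fun q : Pt × Pt => (ph1 q.1, ph1 q.2)) '' Ed n ∪
    (fun q : Pt × Pt => (ph3 q.1, ph3 q.2)) '' Ed n ∪
    (fun q : Pt × Pt => (ph2 q.1, ph2 q.2)) '' Ed n := by
  show (fun q : Pt × Pt => ((2:ℝ)⁻¹ • q.1, (2:ℝ)⁻¹ • q.2)) '' _ = _
  rw [Set.image_union, Set.image_union, Set.image_image, Set.image_image]
  rfl

lemma ed_mem : ∀ n (q : Pt × Pt), q ∈ Ed n → q.1 ∈ V n ∧ q.2 ∈ V n := by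
  intro n; induction n with
  | zero =>
    intro q hq
    rcases hq with rfl | rfl | rfl <;>
      simp [V, Set.mem_insert_iff]
  | succ n ih =>
    intro q hq
    rw [Ed_succ] at hq
    rcases hq with (⟨p, hp, rfl⟩ | ⟨p, hp, rfl⟩) | ⟨p, hp, rfl⟩
    · exact ⟨mem_V1 (ih p hp).1, mem_V1 (ih p hp).2⟩
    · exact ⟨mem_V3 (ih p hp).1, mem_V3 (ih p hp).2⟩
    · exact ⟨mem_V2 (ih p hp).1, mem_V2 (ih p hp).2⟩

lemma adj_mem {n : ℕ} {x y : Pt} (h : (SG n).Adj x y) : x ∈ V n ∧ y ∈ V n := by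
  rcases h.1 with h' | h'
  · exact ed_mem n _ h'
  · exact ⟨(ed_mem n _ h').2, (ed_mem n _ h').1⟩

lemma adj_ph1 {n : ℕ} {a b : Pt} (h : (SG n).Adj a b) : (SG (n+1)).Adj (ph1 a) (ph1 b) := by
  refine ⟨?_, fun he => h.2 (ph1_inj he)⟩
  rcases h.1 with h' | h'
  · exact Or.inl (by rw [Ed_succ]; exact Or.inl (Or.inl ⟨(a, b), h', rfl⟩))
  · exact Or.inr (by rw [Ed_succ]; exact Or.inl (Or.inl ⟨(b, a), h', rfl⟩))
lemma adj_ph2 {n : ℕ} {a b : Pt} (h : (SG n).Adj a b) : (SG (n+1)).Adj (ph2 a) (ph2 b) := by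
  refine ⟨?_, fun he => h.2 (ph2_inj he)⟩
  rcases h.1 with h' | h'
  · exact Or.inl (by rw [Ed_succ]; exact Or.inr ⟨(a, b), h', rfl⟩)
  · exact Or.inr (by rw [Ed_succ]; exact Or.inr ⟨(b, a), h', rfl⟩)
lemma adj_ph3 {n : ℕ} {a b : Pt} (h : (SG n).Adj a b) : (SG (n+1)).Adj (ph3 a) (ph3 b) := by
  refine ⟨?_, fun he => h.2 (ph3_inj he)⟩
  rcases h.1 with h' | h'
  · exact Or.inl (by rw [Ed_succ]; exact Or.inl (Or.inr ⟨(a, b), h', rfl⟩))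
  · exact Or.inr (by rw [Ed_succ]; exact Or.inl (Or.inr ⟨(b, a), h', rfl⟩))

lemma adj_succ {n : ℕ} {x y : Pt} (h : (SG (n+1)).Adj x y) :
    (∃ a b, (SG n).Adj a b ∧ x = ph1 a ∧ y = ph1 b) ∨
    (∃ a b, (SG n).Adj a b ∧ x = ph3 a ∧ y = ph3 b) ∨
    (∃ a b, (SG n).Adj a b ∧ x = ph2 a ∧ y = ph2 b) := by
  obtain ⟨hEd, hne⟩ := h
  have key : ∀ u v : Pt, (u, v) ∈ Ed (n+1) → u ≠ v →
      (∃ a b, (SG n).Adj a b ∧ u = ph1 a ∧ v = ph1 b) ∨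
      (∃ a b, (SG n).Adj a b ∧ u = ph3 a ∧ v = ph3 b) ∨
      (∃ a b, (SG n).Adj a b ∧ u = ph2 a ∧ v = ph2 b) := by
    intro u v huv hne'
    rw [Ed_succ] at huv
    rcases huv with (⟨p, hp, he⟩ | ⟨p, hp, he⟩) | ⟨p, hp, he⟩ <;>
      obtain ⟨he1, he2⟩ := Prod.ext_iff.1 he.symm <;> simp only at he1 he2
    · exact Or.inl ⟨p.1, p.2, ⟨Or.inl hp, fun hc => hne' (by rw [he1, he2, hc])⟩, he1, he2⟩
    · exact Or.inr (Or.inl ⟨p.1, p.2, ⟨Or.inl hp, fun hc => hne' (by rw [he1, he2, hc])⟩, he1, he2⟩)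
    · exact Or.inr (Or.inr ⟨p.1, p.2, ⟨Or.inl hp, fun hc => hne' (by rw [he1, he2, hc])⟩, he1, he2⟩)
  rcases hEd with h' | h'
  · exact key x y h' hne
  · rcases key y x h' hne.symm with ⟨a, b, hab, h1, h2⟩ | ⟨a, b, hab, h1, h2⟩ | ⟨a, b, hab, h1, h2⟩
    · exact Or.inl ⟨b, a, hab.symm, h2, h1⟩
    · exact Or.inr (Or.inl ⟨b, a, hab.symm, h2, h1⟩)
    · exact Or.inr (Or.inr ⟨b, a, hab.symm, h2, h1⟩)

lemma u1_mem_V : ∀ n, u1 ∈ V n := by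
  intro n; induction n with
  | zero => simp [V]
  | succ n ih =>
    have : u1 = ph1 u1 := by simp [ph1_def, u1]
    rw [this]; exact mem_V1 ih
lemma u2_mem_V : ∀ n, u2 ∈ V n := by
  intro n; induction n with
  | zero => simp [V]
  | succ n ih =>
    have : u2 = ph3 u2 := by rw [ph3_def]; simp only [u2, Prod.ext_iff]; norm_num
    rw [this]; exact mem_V3 ih
lemma u3_mem_V : ∀ n, u3 ∈ V n := by
  intro n; induction n with
  | zero => simp [V]
  | succ n ih =>
    have : u3 = ph2 u3 := by rw [ph2_def]; simp only [u3, Prod.ext_iff]; norm_num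
    rw [this]; exact mem_V2 ih
lemma mAB_def : mAB = (1/2, 0) := by
  rw [mAB]; simp only [u1, u3, Prod.ext_iff, Prod.smul_fst, Prod.smul_snd,
    Prod.fst_add, Prod.snd_add, smul_eq_mul]
  exact ⟨by norm_num, by norm_num⟩
lemma mBC_def : mBC = (3/4, Real.sqrt 3/4) := by
  rw [mBC]; simp only [u2, u3, Prod.ext_iff, Prod.smul_fst, Prod.smul_snd,
    Prod.fst_add, Prod.snd_add, smul_eq_mul]
  exact ⟨by norm_num, by ring⟩
lemma mCA_def : mCA = (1/4, Real.sqrt 3/4) := by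
  rw [mCA]; simp only [u1, u2, Prod.ext_iff, Prod.smul_fst, Prod.smul_snd,
    Prod.fst_add, Prod.snd_add, smul_eq_mul]
  exact ⟨by norm_num, by ring⟩

lemma s3_ne : Real.sqrt 3 ≠ 0 := ne_of_gt s3_pos

lemma pt_ne_fst {x y : Pt} (h : x.1 ≠ y.1) : x ≠ y := fun he => h (by rw [he])
lemma pt_ne_snd {x y : Pt} (h : x.2 ≠ y.2) : x ≠ y := fun he => h (by rw [he])
lemma half_s3_pos : 0 < Real.sqrt 3 / 2 := by positivity
lemma quar_s3_pos : 0 < Real.sqrt 3 / 4 := by positivity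

lemma u1_ne_u2 : u1 ≠ u2 := pt_ne_snd (by rw [u1, u2]; exact half_s3_pos.ne)
lemma u1_ne_u3 : u1 ≠ u3 := pt_ne_fst (by rw [u1, u3]; norm_num)
lemma u2_ne_u3 : u2 ≠ u3 := pt_ne_snd (by rw [u2, u3]; exact half_s3_pos.ne')
lemma mAB_ne_u1 : mAB ≠ u1 := pt_ne_fst (by rw [mAB_def, u1]; norm_num)
lemma mAB_ne_u2 : mAB ≠ u2 := pt_ne_snd (by rw [mAB_def, u2]; exact half_s3_pos.ne)
lemma mAB_ne_u3 : mAB ≠ u3 := pt_ne_fst (by rw [mAB_def, u3]; norm_num)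
lemma mBC_ne_u1 : mBC ≠ u1 := pt_ne_fst (by rw [mBC_def, u1]; norm_num)
lemma mBC_ne_u2 : mBC ≠ u2 := pt_ne_fst (by rw [mBC_def, u2]; norm_num)
lemma mBC_ne_u3 : mBC ≠ u3 := pt_ne_snd (by rw [mBC_def, u3]; exact quar_s3_pos.ne')
lemma mCA_ne_u1 : mCA ≠ u1 := pt_ne_fst (by rw [mCA_def, u1]; norm_num)
lemma mCA_ne_u2 : mCA ≠ u2 := pt_ne_fst (by rw [mCA_def, u2]; norm_num)
lemma mCA_ne_u3 : mCA ≠ u3 := pt_ne_fst (by rw [mCA_def, u3]; norm_num)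
lemma mAB_ne_mBC : mAB ≠ mBC := pt_ne_fst (by rw [mAB_def, mBC_def]; norm_num)
lemma mAB_ne_mCA : mAB ≠ mCA := pt_ne_fst (by rw [mAB_def, mCA_def]; norm_num)
lemma mBC_ne_mCA : mBC ≠ mCA := pt_ne_fst (by rw [mBC_def, mCA_def]; norm_num)

lemma not_mem_V_of_not_T {x : Pt} (h : x ∉ T) (n : ℕ) : x ∉ V n :=
  fun hx => h (V_subset_T n hx)

lemma ctr_def : ctr = (1/2, Real.sqrt 3/6) := by
  simp [ctr, u1, u2, u3, Prod.ext_iff, Prod.smul_fst, Prod.smul_snd]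
  norm_num; ring

lemma rho_def (x : Pt) :
    rotccw x = (1 - x.1/2 - Real.sqrt 3 * x.2/2, Real.sqrt 3 * x.1/2 - x.2/2) := by
  rw [rotccw, ctr_def, Prod.ext_iff]
  constructor
  · simp only; linear_combination (1/12 : ℝ) * s3_sq
  · simp only; ring

lemma rho2_def (x : Pt) :
    rotccw (rotccw x) =
      (1/2 - x.1/2 + Real.sqrt 3 * x.2/2,
       Real.sqrt 3/2 - Real.sqrt 3 * x.1/2 - x.2/2) := by
  rw [rho_def, rho_def, Prod.ext_iff]
  constructor
  · simp only; linear_combination (-(x.1)/4 : ℝ) * s3_sq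
  · simp only; linear_combination (-(x.2)/4 : ℝ) * s3_sq

lemma rho3 (x : Pt) : rotccw (rotccw (rotccw x)) = x := by
  rw [rho2_def, rho_def, Prod.ext_iff]
  constructor
  · simp only; linear_combination ((x.1)/4 : ℝ) * s3_sq
  · simp only; linear_combination ((x.2)/4 : ℝ) * s3_sq

lemma rotcw_eq (x : Pt) : rotcw x = rotccw (rotccw x) := by
  rw [rho2_def, rotcw, ctr_def, Prod.ext_iff]
  constructor
  · simp only; linear_combination (-1/12 : ℝ) * s3_sq
  · simp only; ring

lemma rho_u1 : rotccw u1 = u3 := by rw [rho_def]; simp [u1, u3]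
lemma rho_u3 : rotccw u3 = u2 := by rw [rho_def]; simp [u1, u2, u3]; ring
lemma rho_u2 : rotccw u2 = u1 := by
  rw [rho_def]; simp [u1, u2, Prod.ext_iff]
  constructor
  · linear_combination (-1/4 : ℝ) * s3_sq
  · ring

lemma rho_ph1 (x : Pt) : rotccw (ph1 x) = ph2 (rotccw x) := by
  rw [rho_def, rho_def, ph1_def, ph2_def, Prod.ext_iff]
  constructor <;> · simp only; ring
lemma rho_ph2 (x : Pt) : rotccw (ph2 x) = ph3 (rotccw x) := by
  rw [rho_def, rho_def, ph2_def, ph3_def, Prod.ext_iff]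
  constructor <;> · simp only; ring
lemma rho_ph3 (x : Pt) : rotccw (ph3 x) = ph1 (rotccw x) := by
  rw [rho_def, rho_def, ph3_def, ph1_def, Prod.ext_iff]
  constructor
  · simp only; linear_combination (-1/8 : ℝ) * s3_sq
  · simp only; ring

lemma rho_inj : Function.Injective rotccw := by
  intro a b h
  have := congrArg (fun p => rotccw (rotccw p)) h
  simpa [rho3] using this

lemma rho_mem_V : ∀ n, ∀ x ∈ V n, rotccw x ∈ V n := by
  intro n; induction n with
  | zero =>
    intro x hx
    rcases hx with rfl | rfl | rfl
    · rw [rho_u1]; exact u3_mem_V 0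
    · rw [rho_u2]; exact u1_mem_V 0
    · rw [rho_u3]; exact u2_mem_V 0
  | succ n ih =>
    intro x hx
    rcases cases_V hx with ⟨z, hz, rfl⟩ | ⟨z, hz, rfl⟩ | ⟨z, hz, rfl⟩
    · rw [rho_ph1]; exact mem_V2 (ih z hz)
    · rw [rho_ph3]; exact mem_V1 (ih z hz)
    · rw [rho_ph2]; exact mem_V3 (ih z hz)

lemma rho_adj : ∀ n, ∀ x y : Pt, (SG n).Adj x y → (SG n).Adj (rotccw x) (rotccw y) := by
  intro n; induction n with
  | zero =>
    intro x y h
    obtain ⟨hEd, hne⟩ := h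
    have hne' : rotccw x ≠ rotccw y := fun hc => hne (rho_inj hc)
    refine ⟨?_, hne'⟩
    rcases hEd with h | h <;>
        simp only [Ed, Set.mem_insert_iff, Set.mem_singleton_iff, Prod.mk.injEq] at h <;>
        rcases h with ⟨rfl, rfl⟩ | ⟨rfl, rfl⟩ | ⟨rfl, rfl⟩ <;>
        simp only [rho_u1, rho_u2, rho_u3] <;>
        simp [Ed]
  | succ n ih =>
    intro x y h
    rcases adj_succ h with ⟨a, b, hab, rfl, rfl⟩ | ⟨a, b, hab, rfl, rfl⟩ | ⟨a, b, hab, rfl, rfl⟩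
    · rw [rho_ph1, rho_ph1]; exact adj_ph2 (ih a b hab)
    · rw [rho_ph3, rho_ph3]; exact adj_ph1 (ih a b hab)
    · rw [rho_ph2, rho_ph2]; exact adj_ph3 (ih a b hab)
/-- Explicit distance-to-`u1` function. -/
def D1 : ℕ → Pt → ℕ
  | 0, x => if x = u1 then 0 else 1
  | n+1, x =>
      if (2:ℝ)•x ∈ V n then D1 n ((2:ℝ)•x)
      else if (2:ℝ)•x - u2 ∈ V n then 2^n + D1 n ((2:ℝ)•x - u2)
      else 2^n + D1 n ((2:ℝ)•x - u3)

lemma D1_zero (x : Pt) : D1 0 x = if x = u1 then 0 else 1 := rfl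
lemma D1_succ (n : ℕ) (x : Pt) : D1 (n+1) x =
    if (2:ℝ)•x ∈ V n then D1 n ((2:ℝ)•x)
    else if (2:ℝ)•x - u2 ∈ V n then 2^n + D1 n ((2:ℝ)•x - u2)
    else 2^n + D1 n ((2:ℝ)•x - u3) := rfl

lemma dbl_u1 : (2:ℝ)•u1 = u1 := by
  simp [u1, Prod.ext_iff, Prod.smul_fst, Prod.smul_snd]
lemma n2u3 : (2:ℝ)•u3 ∉ T := by
  intro h
  obtain ⟨h1, h2, h3⟩ := h
  simp only [u3, Prod.smul_fst, Prod.smul_snd, smul_eq_mul] at h1 h2 h3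
  have := s3_pos; nlinarith
lemma n2u3u2 : (2:ℝ)•u3 - u2 ∉ T := by
  intro h
  obtain ⟨h1, h2, h3⟩ := h
  simp only [u3, u2, Prod.smul_fst, Prod.smul_snd, smul_eq_mul,
    Prod.fst_sub, Prod.snd_sub] at h1 h2 h3
  have := s3_pos; nlinarith
lemma n2u2 : (2:ℝ)•u2 ∉ T := by
  intro h
  obtain ⟨h1, h2, h3⟩ := h
  simp only [u2, Prod.smul_fst, Prod.smul_snd, smul_eq_mul] at h1 h2 h3
  have := s3_pos; nlinarith
lemma dbl_u3_sub : (2:ℝ)•u3 - u3 = u3 := by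
  simp only [u3, Prod.ext_iff, Prod.smul_fst, Prod.smul_snd, Prod.fst_sub, Prod.snd_sub,
    smul_eq_mul]
  norm_num
lemma dbl_u2_sub : (2:ℝ)•u2 - u2 = u2 := by
  simp only [u2, Prod.ext_iff, Prod.smul_fst, Prod.smul_snd, Prod.fst_sub, Prod.snd_sub,
    smul_eq_mul]
  constructor <;> ring

lemma D1_u1 : ∀ n, D1 n u1 = 0 := by
  intro n; induction n with
  | zero => simp [D1_zero]
  | succ n ih => rw [D1_succ, dbl_u1, if_pos (u1_mem_V n), ih]
lemma D1_u3 : ∀ n, D1 n u3 = 2^n := by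
  intro n; induction n with
  | zero => simp [D1_zero, u1_ne_u3.symm]
  | succ n ih =>
    rw [D1_succ, if_neg (not_mem_V_of_not_T n2u3 n), if_neg (not_mem_V_of_not_T n2u3u2 n),
      dbl_u3_sub, ih, pow_succ]
    ring
lemma D1_u2 : ∀ n, D1 n u2 = 2^n := by
  intro n; induction n with
  | zero => simp [D1_zero, u1_ne_u2.symm]
  | succ n ih =>
    rw [D1_succ, if_neg (not_mem_V_of_not_T n2u2 n), dbl_u2_sub, if_pos (u2_mem_V n),
      ih, pow_succ]
    ring

lemma D1_ph1 {n : ℕ} {z : Pt} (hz : z ∈ V n) : D1 (n+1) (ph1 z) = D1 n z := by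
  rw [D1_succ, dbl_ph1, if_pos hz]

lemma u3_add_u1 : u3 + u1 = u3 := by simp [u1, u3]
lemma u2_add_u1 : u2 + u1 = u2 := by simp [u1, u2]

lemma D1_ph2 {n : ℕ} {z : Pt} (hz : z ∈ V n) : D1 (n+1) (ph2 z) = 2^n + D1 n z := by
  rw [D1_succ, dbl_ph2]
  by_cases h1 : u3 + z ∈ V n
  · have hz1 : z = u1 := T_cap3 (V_subset_T n hz) (V_subset_T n h1)
    subst hz1
    rw [if_pos h1, u3_add_u1, D1_u3, D1_u1]
    ring
  · rw [if_neg h1]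
    by_cases h2 : u3 + z - u2 ∈ V n
    · have key : z = u2 ∧ u3 + z - u2 = u3 := by
        have heq : u2 + (u3 + z - u2) = u3 + z := by abel
        have := T_cap23 (V_subset_T n h2) (V_subset_T n hz) heq
        exact ⟨this.2, this.1⟩
      rw [if_pos h2, key.2, key.1, D1_u3, D1_u2]
    · rw [if_neg h2]
      have : u3 + z - u3 = z := by abel
      rw [this]

lemma D1_ph3 {n : ℕ} {z : Pt} (hz : z ∈ V n) : D1 (n+1) (ph3 z) = 2^n + D1 n z := by
  rw [D1_succ, dbl_ph3]
  by_cases h1 : u2 + z ∈ V n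
  · have hz1 : z = u1 := T_cap2 (V_subset_T n hz) (V_subset_T n h1)
    subst hz1
    rw [if_pos h1, u2_add_u1, D1_u2, D1_u1]
    ring
  · rw [if_neg h1]
    have : u2 + z - u2 = z := by abel
    rw [this, if_pos hz]

lemma D1_le : ∀ n, ∀ z ∈ V n, D1 n z ≤ 2^n := by
  intro n; induction n with
  | zero => intro z _; rw [D1_zero]; split <;> simp
  | succ n ih =>
    intro z hz
    rcases cases_V hz with ⟨w, hw, rfl⟩ | ⟨w, hw, rfl⟩ | ⟨w, hw, rfl⟩
    · rw [D1_ph1 hw, pow_succ]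
      have := ih w hw
      have : (0:ℕ) < 2^n := Nat.pow_pos (n := n) (by norm_num)
      have := ih w hw; omega
    · rw [D1_ph3 hw, pow_succ]
      have := ih w hw; omega
    · rw [D1_ph2 hw, pow_succ]
      have := ih w hw; omega
/-- copy maps as graph homomorphisms -/
def hom1 (n : ℕ) : SG n →g SG (n+1) := ⟨ph1, fun h => adj_ph1 h⟩
def hom2 (n : ℕ) : SG n →g SG (n+1) := ⟨ph2, fun h => adj_ph2 h⟩
def hom3 (n : ℕ) : SG n →g SG (n+1) := ⟨ph3, fun h => adj_ph3 h⟩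
def homr (n : ℕ) : SG n →g SG n := ⟨rotccw, fun h => rho_adj n _ _ h⟩

lemma adj0_u2_u1 : (SG 0).Adj u2 u1 :=
  ⟨Or.inr (Set.mem_insert _ _), u1_ne_u2.symm⟩
lemma adj0_u3_u1 : (SG 0).Adj u3 u1 :=
  ⟨Or.inr (by simp [Ed]), u1_ne_u3.symm⟩

lemma walk_ub : ∀ n, ∀ z ∈ V n, ∃ p : (SG n).Walk z u1, p.length ≤ D1 n z := by
  intro n; induction n with
  | zero =>
    intro z hz
    rcases hz with rfl | rfl | rfl
    · exact ⟨SimpleGraph.Walk.nil, by simp⟩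
    · refine ⟨SimpleGraph.Walk.cons adj0_u2_u1 SimpleGraph.Walk.nil, ?_⟩
      simp [D1_zero, u1_ne_u2.symm]
    · refine ⟨SimpleGraph.Walk.cons adj0_u3_u1 SimpleGraph.Walk.nil, ?_⟩
      simp [D1_zero, u1_ne_u3.symm]
  | succ n ih =>
    intro z hz
    rcases cases_V hz with ⟨w, hw, rfl⟩ | ⟨w, hw, rfl⟩ | ⟨w, hw, rfl⟩
    · obtain ⟨p, hp⟩ := ih w hw
      have hu : ph1 u1 = u1 := by rw [ph1_def]; simp [u1]
      refine ⟨(p.map (hom1 n)).copy rfl hu, ?_⟩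
      erw [SimpleGraph.Walk.length_copy, SimpleGraph.Walk.length_map, D1_ph1 hw]
      exact hp
    · -- copy 3 : from ph3 w to ph3 u1 = mCA, then mCA = ph1 u2 to u1
      obtain ⟨p, hp⟩ := ih w hw
      obtain ⟨q, hq⟩ := ih u2 (u2_mem_V n)
      have hu : ph1 u1 = u1 := by rw [ph1_def]; simp [u1]
      have hu2 : ph3 u1 = ph1 u2 := by
        rw [ph3_def, ph1_def]; simp [u1, u2]
      refine ⟨((p.map (hom3 n)).copy rfl hu2).append ((q.map (hom1 n)).copy rfl hu), ?_⟩
      erw [SimpleGraph.Walk.length_append, SimpleGraph.Walk.length_copy,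
        SimpleGraph.Walk.length_copy, SimpleGraph.Walk.length_map,
        SimpleGraph.Walk.length_map, D1_ph3 hw]
      have := D1_u2 n ▸ hq
      omega
    · obtain ⟨p, hp⟩ := ih w hw
      obtain ⟨q, hq⟩ := ih u3 (u3_mem_V n)
      have hu : ph1 u1 = u1 := by rw [ph1_def]; simp [u1]
      have hu2 : ph2 u1 = ph1 u3 := by
        rw [ph2_def, ph1_def]; simp [u1, u3]
      refine ⟨((p.map (hom2 n)).copy rfl hu2).append ((q.map (hom1 n)).copy rfl hu), ?_⟩
      erw [SimpleGraph.Walk.length_append, SimpleGraph.Walk.length_copy,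
        SimpleGraph.Walk.length_copy, SimpleGraph.Walk.length_map,
        SimpleGraph.Walk.length_map, D1_ph2 hw]
      have := D1_u3 n ▸ hq
      omega

lemma lip : ∀ n, ∀ x y : Pt, (SG n).Adj x y → D1 n x ≤ D1 n y + 1 := by
  intro n; induction n with
  | zero =>
    intro x y _
    have : D1 0 x ≤ 1 := by rw [D1_zero]; split <;> omega
    omega
  | succ n ih =>
    intro x y h
    rcases adj_succ h with ⟨a, b, hab, rfl, rfl⟩ | ⟨a, b, hab, rfl, rfl⟩ |
      ⟨a, b, hab, rfl, rfl⟩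
    · rw [D1_ph1 (adj_mem hab).1, D1_ph1 (adj_mem hab).2]; exact ih a b hab
    · rw [D1_ph3 (adj_mem hab).1, D1_ph3 (adj_mem hab).2]
      have := ih a b hab; omega
    · rw [D1_ph2 (adj_mem hab).1, D1_ph2 (adj_mem hab).2]
      have := ih a b hab; omega

lemma D1_le_walk {n : ℕ} {x y : Pt} (p : (SG n).Walk x y) :
    D1 n x ≤ D1 n y + p.length := by
  induction p with
  | nil => simp
  | cons h q ih =>
    have := lip n _ _ h
    simp only [SimpleGraph.Walk.length_cons]
    omega

lemma reach_u1 {n : ℕ} {z : Pt} (hz : z ∈ V n) : (SG n).Reachable z u1 :=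
  ⟨(walk_ub n z hz).choose⟩

lemma gdist_eq_D1 {n : ℕ} {z : Pt} (hz : z ∈ V n) : (SG n).dist z u1 = D1 n z := by
  apply le_antisymm
  · obtain ⟨p, hp⟩ := walk_ub n z hz
    exact le_trans (SimpleGraph.dist_le p) hp
  · obtain ⟨p, hp⟩ := (reach_u1 hz).exists_walk_length_eq_dist
    have := D1_le_walk p
    rw [hp, D1_u1] at this
    omega

lemma reach_VV {n : ℕ} {x y : Pt} (hx : x ∈ V n) (hy : y ∈ V n) :
    (SG n).Reachable x y :=
  (reach_u1 hx).trans (reach_u1 hy).symm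

lemma dist_map_le {n : ℕ} (f : SG n →g SG n) {x y : Pt} (h : (SG n).Reachable x y) :
    (SG n).dist (f x) (f y) ≤ (SG n).dist x y := by
  obtain ⟨p, hp⟩ := h.exists_walk_length_eq_dist
  calc (SG n).dist (f x) (f y) ≤ (p.map f).length := SimpleGraph.dist_le _
    _ = (SG n).dist x y := by rw [SimpleGraph.Walk.length_map, hp]

lemma gdist_rho {n : ℕ} {x y : Pt} (hx : x ∈ V n) (hy : y ∈ V n) :
    (SG n).dist (rotccw x) (rotccw y) = (SG n).dist x y := by
  apply le_antisymm
  · exact dist_map_le (homr n) (reach_VV hx hy)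
  · have h1 : (SG n).dist (rotccw (rotccw (rotccw x))) (rotccw (rotccw (rotccw y))) ≤
        (SG n).dist (rotccw x) (rotccw y) := by
      apply le_trans (dist_map_le (homr n) ?_) (dist_map_le (homr n) ?_)
      · exact reach_VV (rho_mem_V n _ (rho_mem_V n _ hx)) (rho_mem_V n _ (rho_mem_V n _ hy))
      · exact reach_VV (rho_mem_V n _ hx) (rho_mem_V n _ hy)
    rwa [rho3, rho3] at h1

lemma gdist_u2 {n : ℕ} {z : Pt} (hz : z ∈ V n) : (SG n).dist z u2 = D1 n (rotccw z) := by
  have : (SG n).dist z u2 = (SG n).dist (rotccw z) (rotccw u2) :=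
    (gdist_rho hz (u2_mem_V n)).symm
  rw [this, rho_u2, gdist_eq_D1 (rho_mem_V n _ hz)]

lemma gdist_u3 {n : ℕ} {z : Pt} (hz : z ∈ V n) :
    (SG n).dist z u3 = D1 n (rotccw (rotccw z)) := by
  have : (SG n).dist z u3 = (SG n).dist (rotccw z) (rotccw u3) :=
    (gdist_rho hz (u3_mem_V n)).symm
  rw [this, rho_u3, gdist_u2 (rho_mem_V n _ hz)]

lemma dcorner_ph1 {n : ℕ} {z : Pt} (hz : z ∈ V n) : dcorner (n+1) (ph1 z) = D1 n z := by
  have hx : ph1 z ∈ V (n+1) := mem_V1 hz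
  have e1 : gdist (n+1) (ph1 z) u1 = D1 n z := by
    rw [gdist, gdist_eq_D1 hx, D1_ph1 hz]
  have e2 : gdist (n+1) (ph1 z) u2 = 2^n + D1 n (rotccw z) := by
    rw [gdist, gdist_u2 hx, rho_ph1, D1_ph2 (rho_mem_V n _ hz)]
  have e3 : gdist (n+1) (ph1 z) u3 = 2^n + D1 n (rotccw (rotccw z)) := by
    rw [gdist, gdist_u3 hx, rho_ph1, rho_ph2, D1_ph3 (rho_mem_V n _ (rho_mem_V n _ hz))]
  rw [dcorner, e1, e2, e3]
  have := D1_le n z hz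
  omega

lemma dcorner_ph2 {n : ℕ} {z : Pt} (hz : z ∈ V n) :
    dcorner (n+1) (ph2 z) = D1 n (rotccw (rotccw z)) := by
  have hx : ph2 z ∈ V (n+1) := mem_V2 hz
  have e1 : gdist (n+1) (ph2 z) u1 = 2^n + D1 n z := by
    rw [gdist, gdist_eq_D1 hx, D1_ph2 hz]
  have e2 : gdist (n+1) (ph2 z) u2 = 2^n + D1 n (rotccw z) := by
    rw [gdist, gdist_u2 hx, rho_ph2, D1_ph3 (rho_mem_V n _ hz)]
  have e3 : gdist (n+1) (ph2 z) u3 = D1 n (rotccw (rotccw z)) := by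
    rw [gdist, gdist_u3 hx, rho_ph2, rho_ph3, D1_ph1 (rho_mem_V n _ (rho_mem_V n _ hz))]
  rw [dcorner, e1, e2, e3]
  have := D1_le n _ (rho_mem_V n _ (rho_mem_V n _ hz))
  omega

lemma dcorner_ph3 {n : ℕ} {z : Pt} (hz : z ∈ V n) :
    dcorner (n+1) (ph3 z) = D1 n (rotccw z) := by
  have hx : ph3 z ∈ V (n+1) := mem_V3 hz
  have e1 : gdist (n+1) (ph3 z) u1 = 2^n + D1 n z := by
    rw [gdist, gdist_eq_D1 hx, D1_ph3 hz]
  have e2 : gdist (n+1) (ph3 z) u2 = D1 n (rotccw z) := by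
    rw [gdist, gdist_u2 hx, rho_ph3, D1_ph1 (rho_mem_V n _ hz)]
  have e3 : gdist (n+1) (ph3 z) u3 = 2^n + D1 n (rotccw (rotccw z)) := by
    rw [gdist, gdist_u3 hx, rho_ph3, rho_ph1, D1_ph2 (rho_mem_V n _ (rho_mem_V n _ hz))]
  rw [dcorner, e1, e2, e3]
  have := D1_le n _ (rho_mem_V n _ hz)
  omega
/-- neighbor set -/
def Nb (n : ℕ) (x : Pt) : Set Pt := {y | (SG n).Adj x y}

lemma mem_Nb {n : ℕ} {x y : Pt} : y ∈ Nb n x ↔ (SG n).Adj x y := Iff.rfl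

lemma nb_mem_V {n : ℕ} {x y : Pt} (h : y ∈ Nb n x) : y ∈ V n := (adj_mem h).2

lemma adj0_iff {x y : Pt} : (SG 0).Adj x y ↔
    ((x = u1 ∧ y = u2) ∨ (x = u2 ∧ y = u3) ∨ (x = u1 ∧ y = u3) ∨
     (x = u2 ∧ y = u1) ∨ (x = u3 ∧ y = u2) ∨ (x = u3 ∧ y = u1)) := by
  constructor
  · rintro ⟨h, hne⟩
    rcases h with h | h <;>
      simp only [Ed, Set.mem_insert_iff, Set.mem_singleton_iff, Prod.mk.injEq] at h <;>
      tauto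
  · intro h
    rcases h with ⟨rfl, rfl⟩ | ⟨rfl, rfl⟩ | ⟨rfl, rfl⟩ | ⟨rfl, rfl⟩ | ⟨rfl, rfl⟩ | ⟨rfl, rfl⟩
    · exact ⟨Or.inl (by simp [Ed]), u1_ne_u2⟩
    · exact ⟨Or.inl (by simp [Ed]), u2_ne_u3⟩
    · exact ⟨Or.inl (by simp [Ed]), u1_ne_u3⟩
    · exact ⟨Or.inr (by simp [Ed]), u1_ne_u2.symm⟩
    · exact ⟨Or.inr (by simp [Ed]), u2_ne_u3.symm⟩
    · exact ⟨Or.inr (by simp [Ed]), u1_ne_u3.symm⟩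

lemma nb0_u1 : Nb 0 u1 = {u2, u3} := by
  ext y
  rw [mem_Nb, adj0_iff]
  constructor
  · intro h
    rcases h with ⟨h1, rfl⟩ | ⟨h1, rfl⟩ | ⟨h1, rfl⟩ | ⟨h1, rfl⟩ | ⟨h1, rfl⟩ | ⟨h1, rfl⟩ <;>
      first
        | exact Set.mem_insert _ _
        | exact Set.mem_insert_iff.2 (Or.inr rfl)
        | exact absurd h1 u1_ne_u2
        | exact absurd h1 u1_ne_u3
        | exact absurd h1.symm u1_ne_u2
        | exact absurd h1.symm u1_ne_u3
        | exact absurd h1 u2_ne_u3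
        | exact absurd h1.symm u2_ne_u3
  · rintro (rfl | rfl)
    · tauto
    · tauto
lemma nb0_u2 : Nb 0 u2 = {u1, u3} := by
  ext y
  rw [mem_Nb, adj0_iff]
  constructor
  · intro h
    rcases h with ⟨h1, rfl⟩ | ⟨h1, rfl⟩ | ⟨h1, rfl⟩ | ⟨h1, rfl⟩ | ⟨h1, rfl⟩ | ⟨h1, rfl⟩ <;>
      first
        | exact Set.mem_insert _ _
        | exact Set.mem_insert_iff.2 (Or.inr rfl)
        | exact absurd h1 u1_ne_u2
        | exact absurd h1 u1_ne_u3
        | exact absurd h1.symm u1_ne_u2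
        | exact absurd h1.symm u1_ne_u3
        | exact absurd h1 u2_ne_u3
        | exact absurd h1.symm u2_ne_u3
  · rintro (rfl | rfl)
    · tauto
    · tauto
lemma nb0_u3 : Nb 0 u3 = {u1, u2} := by
  ext y
  rw [mem_Nb, adj0_iff]
  constructor
  · intro h
    rcases h with ⟨h1, rfl⟩ | ⟨h1, rfl⟩ | ⟨h1, rfl⟩ | ⟨h1, rfl⟩ | ⟨h1, rfl⟩ | ⟨h1, rfl⟩ <;>
      first
        | exact Set.mem_insert _ _
        | exact Set.mem_insert_iff.2 (Or.inr rfl)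
        | exact absurd h1 u1_ne_u2
        | exact absurd h1 u1_ne_u3
        | exact absurd h1.symm u1_ne_u2
        | exact absurd h1.symm u1_ne_u3
        | exact absurd h1 u2_ne_u3
        | exact absurd h1.symm u2_ne_u3
  · rintro (rfl | rfl)
    · tauto
    · tauto

lemma eq13 {z a : Pt} (h : ph1 z = ph3 a) : z = u2 + a := by
  have := congrArg (fun p : Pt => (2:ℝ) • p) h
  simpa [dbl_ph1, dbl_ph3] using this
lemma eq12 {z a : Pt} (h : ph1 z = ph2 a) : z = u3 + a := by
  have := congrArg (fun p : Pt => (2:ℝ) • p) h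
  simpa [dbl_ph1, dbl_ph2] using this
lemma eq32 {z a : Pt} (h : ph3 z = ph2 a) : u2 + z = u3 + a := by
  have := congrArg (fun p : Pt => (2:ℝ) • p) h
  simpa [dbl_ph3, dbl_ph2] using this

lemma nb_ph1 {n : ℕ} {z : Pt} (hz : z ∈ V n) (h2 : z ≠ u2) (h3 : z ≠ u3) :
    Nb (n+1) (ph1 z) = ph1 '' Nb n z := by
  ext y
  constructor
  · intro hy
    rcases adj_succ hy with ⟨a, b, hab, ha, rfl⟩ | ⟨a, b, hab, ha, rfl⟩ |
      ⟨a, b, hab, ha, rfl⟩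
    · exact ⟨b, by rwa [← ph1_inj ha] at hab, rfl⟩
    · exfalso
      have hz2 : z = u2 + a := eq13 ha
      have : a = u1 := T_cap2 (V_subset_T n (adj_mem hab).1) (hz2 ▸ V_subset_T n hz)
      rw [this, u2_add_u1] at hz2
      exact h2 hz2
    · exfalso
      have hz2 : z = u3 + a := eq12 ha
      have : a = u1 := T_cap3 (V_subset_T n (adj_mem hab).1) (hz2 ▸ V_subset_T n hz)
      rw [this, u3_add_u1] at hz2
      exact h3 hz2
  · rintro ⟨w, hw, rfl⟩
    exact adj_ph1 hw

lemma nb_ph2 {n : ℕ} {z : Pt} (hz : z ∈ V n) (h1 : z ≠ u1) (h2 : z ≠ u2) :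
    Nb (n+1) (ph2 z) = ph2 '' Nb n z := by
  ext y
  constructor
  · intro hy
    rcases adj_succ hy with ⟨a, b, hab, ha, rfl⟩ | ⟨a, b, hab, ha, rfl⟩ |
      ⟨a, b, hab, ha, rfl⟩
    · exfalso
      have hz2 : a = u3 + z := eq12 ha.symm
      have : z = u1 := T_cap3 (V_subset_T n hz) (hz2 ▸ V_subset_T n (adj_mem hab).1)
      exact h1 this
    · exfalso
      have hz2 : u2 + a = u3 + z := eq32 ha.symm
      have := T_cap23 (V_subset_T n (adj_mem hab).1) (V_subset_T n hz) hz2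
      exact h2 this.2
    · exact ⟨b, by rwa [← ph2_inj ha] at hab, rfl⟩
  · rintro ⟨w, hw, rfl⟩
    exact adj_ph2 hw

lemma nb_ph3 {n : ℕ} {z : Pt} (hz : z ∈ V n) (h1 : z ≠ u1) (h3 : z ≠ u3) :
    Nb (n+1) (ph3 z) = ph3 '' Nb n z := by
  ext y
  constructor
  · intro hy
    rcases adj_succ hy with ⟨a, b, hab, ha, rfl⟩ | ⟨a, b, hab, ha, rfl⟩ |
      ⟨a, b, hab, ha, rfl⟩
    · exfalso
      have hz2 : a = u2 + z := eq13 ha.symm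
      have : z = u1 := T_cap2 (V_subset_T n hz) (hz2 ▸ V_subset_T n (adj_mem hab).1)
      exact h1 this
    · exact ⟨b, by rwa [← ph3_inj ha] at hab, rfl⟩
    · exfalso
      have hz2 : u2 + z = u3 + a := eq32 ha
      have := T_cap23 (V_subset_T n hz) (V_subset_T n (adj_mem hab).1) hz2
      exact h3 this.1
  · rintro ⟨w, hw, rfl⟩
    exact adj_ph3 hw

lemma mAB_eq1 : mAB = ph1 u3 := by
  rw [mAB_def, ph1_def]; simp only [u3, u1, u2, u3, Prod.ext_iff]; exact ⟨by norm_num, by ring⟩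
lemma mAB_eq2 : mAB = ph2 u1 := by
  rw [mAB_def, ph2_def]; simp only [u1, u1, u2, u3, Prod.ext_iff]; exact ⟨by norm_num, by ring⟩
lemma mCA_eq1 : mCA = ph1 u2 := by
  rw [mCA_def, ph1_def]; simp only [u2, u1, u2, u3, Prod.ext_iff]; exact ⟨by norm_num, by ring⟩
lemma mCA_eq3 : mCA = ph3 u1 := by
  rw [mCA_def, ph3_def]; simp only [u1, u1, u2, u3, Prod.ext_iff]; exact ⟨by norm_num, by ring⟩
lemma mBC_eq2 : mBC = ph2 u2 := by
  rw [mBC_def, ph2_def]; simp only [u2, u1, u2, u3, Prod.ext_iff]; exact ⟨by norm_num, by ring⟩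
lemma mBC_eq3 : mBC = ph3 u3 := by
  rw [mBC_def, ph3_def]; simp only [u3, u1, u2, u3, Prod.ext_iff]; exact ⟨by norm_num, by ring⟩

lemma nT_u3u2 : u3 - u2 ∉ T := by
  intro h
  obtain ⟨h1, _, _⟩ := h
  simp only [u3, u2, Prod.fst_sub, Prod.snd_sub] at h1
  have := s3_pos; nlinarith
lemma nT_u2u3 : u2 - u3 ∉ T := by
  intro h
  obtain ⟨_, h2, _⟩ := h
  simp only [u3, u2, Prod.fst_sub, Prod.snd_sub] at h2
  have := s3_pos; nlinarith
lemma nT_u2au3 : u2 + u3 ∉ T := by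
  intro h
  obtain ⟨_, _, h3⟩ := h
  simp only [u3, u2, Prod.fst_add, Prod.snd_add] at h3
  have := s3_pos; nlinarith

lemma nb_mAB (n : ℕ) : Nb (n+1) mAB = ph1 '' Nb n u3 ∪ ph2 '' Nb n u1 := by
  ext y
  constructor
  · intro hy
    rcases adj_succ hy with ⟨a, b, hab, ha, rfl⟩ | ⟨a, b, hab, ha, rfl⟩ |
      ⟨a, b, hab, ha, rfl⟩
    · rw [mAB_eq1] at ha
      rw [← ph1_inj ha] at hab
      exact Or.inl ⟨b, hab, rfl⟩
    · exfalso
      rw [mAB_eq1] at ha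
      have : u3 = u2 + a := eq13 ha
      have ha2 : a = u3 - u2 := by rw [this]; try abel
      exact nT_u3u2 (ha2 ▸ V_subset_T n (adj_mem hab).1)
    · rw [mAB_eq2] at ha
      rw [← ph2_inj ha] at hab
      exact Or.inr ⟨b, hab, rfl⟩
  · rintro (⟨w, hw, rfl⟩ | ⟨w, hw, rfl⟩)
    · rw [mAB_eq1]; exact adj_ph1 hw
    · rw [mAB_eq2]; exact adj_ph2 hw

lemma nb_mCA (n : ℕ) : Nb (n+1) mCA = ph1 '' Nb n u2 ∪ ph3 '' Nb n u1 := by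
  ext y
  constructor
  · intro hy
    rcases adj_succ hy with ⟨a, b, hab, ha, rfl⟩ | ⟨a, b, hab, ha, rfl⟩ |
      ⟨a, b, hab, ha, rfl⟩
    · rw [mCA_eq1] at ha
      rw [← ph1_inj ha] at hab
      exact Or.inl ⟨b, hab, rfl⟩
    · rw [mCA_eq3] at ha
      rw [← ph3_inj ha] at hab
      exact Or.inr ⟨b, hab, rfl⟩
    · exfalso
      rw [mCA_eq1] at ha
      have : u2 = u3 + a := eq12 ha
      have ha2 : a = u2 - u3 := by rw [this]; try abel
      exact nT_u2u3 (ha2 ▸ V_subset_T n (adj_mem hab).1)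
  · rintro (⟨w, hw, rfl⟩ | ⟨w, hw, rfl⟩)
    · rw [mCA_eq1]; exact adj_ph1 hw
    · rw [mCA_eq3]; exact adj_ph3 hw

lemma nb_mBC (n : ℕ) : Nb (n+1) mBC = ph2 '' Nb n u2 ∪ ph3 '' Nb n u3 := by
  ext y
  constructor
  · intro hy
    rcases adj_succ hy with ⟨a, b, hab, ha, rfl⟩ | ⟨a, b, hab, ha, rfl⟩ |
      ⟨a, b, hab, ha, rfl⟩
    · exfalso
      rw [mBC_eq3] at ha
      have : a = u2 + u3 := by
        have := eq13 ha.symm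
        rw [this]; try abel
      exact nT_u2au3 (this ▸ V_subset_T n (adj_mem hab).1)
    · rw [mBC_eq3] at ha
      rw [← ph3_inj ha] at hab
      exact Or.inr ⟨b, hab, rfl⟩
    · rw [mBC_eq2] at ha
      rw [← ph2_inj ha] at hab
      exact Or.inl ⟨b, hab, rfl⟩
  · rintro (⟨w, hw, rfl⟩ | ⟨w, hw, rfl⟩)
    · rw [mBC_eq2]; exact adj_ph2 hw
    · rw [mBC_eq3]; exact adj_ph3 hw

lemma image_pair (f : Pt → Pt) (a b : Pt) : f '' {a, b} = {f a, f b} := by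
  simp [Set.image_insert_eq]

/-- corner neighborhoods invariant -/
lemma cn1 : ∀ n, ∃ a b : Pt, a ≠ b ∧ Nb n u1 = {a, b} ∧ D1 n a = 1 ∧ D1 n b = 1 := by
  intro n; induction n with
  | zero =>
    exact ⟨u2, u3, u2_ne_u3, nb0_u1, by simp [D1_zero, u1_ne_u2.symm],
      by simp [D1_zero, u1_ne_u3.symm]⟩
  | succ n ih =>
    obtain ⟨a, b, hab, hnb, ha, hb⟩ := ih
    have haV : a ∈ V n := nb_mem_V (by rw [hnb]; exact Set.mem_insert _ _)
    have hbV : b ∈ V n := nb_mem_V (by rw [hnb]; exact Set.mem_insert_iff.2 (Or.inr rfl))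
    refine ⟨ph1 a, ph1 b, fun h => hab (ph1_inj h), ?_, ?_, ?_⟩
    · have hu : u1 = ph1 u1 := by rw [ph1_def]; simp [u1]
      rw [hu, nb_ph1 (u1_mem_V n) u1_ne_u2 u1_ne_u3, hnb, image_pair]
    · rw [D1_ph1 haV, ha]
    · rw [D1_ph1 hbV, hb]

lemma cn3 : ∀ n, ∃ a b : Pt, a ≠ b ∧ Nb n u3 = {a, b} ∧ D1 n a = 2^n - 1 ∧ D1 n b = 2^n := by
  intro n; induction n with
  | zero =>
    exact ⟨u1, u2, u1_ne_u2, nb0_u3, by simp [D1_zero],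
      by simp [D1_zero, u1_ne_u2.symm]⟩
  | succ n ih =>
    obtain ⟨a, b, hab, hnb, ha, hb⟩ := ih
    have haV : a ∈ V n := nb_mem_V (by rw [hnb]; exact Set.mem_insert _ _)
    have hbV : b ∈ V n := nb_mem_V (by rw [hnb]; exact Set.mem_insert_iff.2 (Or.inr rfl))
    have hp : (0:ℕ) < 2^n := Nat.pow_pos (n := n) (by norm_num)
    refine ⟨ph2 a, ph2 b, fun h => hab (ph2_inj h), ?_, ?_, ?_⟩
    · have hu : u3 = ph2 u3 := by rw [ph2_def]; simp only [u3, Prod.ext_iff]; norm_num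
      rw [hu, nb_ph2 (u3_mem_V n) u1_ne_u3.symm u2_ne_u3.symm, hnb, image_pair]
    · rw [D1_ph2 haV, ha, pow_succ]; omega
    · rw [D1_ph2 hbV, hb, pow_succ]; omega

lemma cn2 : ∀ n, ∃ a b : Pt, a ≠ b ∧ Nb n u2 = {a, b} ∧ D1 n a = 2^n - 1 ∧ D1 n b = 2^n := by
  intro n; induction n with
  | zero =>
    exact ⟨u1, u3, u1_ne_u3, nb0_u2, by simp [D1_zero],
      by simp [D1_zero, u1_ne_u3.symm]⟩
  | succ n ih =>
    obtain ⟨a, b, hab, hnb, ha, hb⟩ := ih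
    have haV : a ∈ V n := nb_mem_V (by rw [hnb]; exact Set.mem_insert _ _)
    have hbV : b ∈ V n := nb_mem_V (by rw [hnb]; exact Set.mem_insert_iff.2 (Or.inr rfl))
    have hp : (0:ℕ) < 2^n := Nat.pow_pos (n := n) (by norm_num)
    refine ⟨ph3 a, ph3 b, fun h => hab (ph3_inj h), ?_, ?_, ?_⟩
    · have hu : u2 = ph3 u2 := by
        rw [ph3_def]; simp only [u2, Prod.ext_iff]; norm_num
      rw [hu, nb_ph3 (u2_mem_V n) u1_ne_u2.symm u2_ne_u3, hnb, image_pair]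
    · rw [D1_ph3 haV, ha, pow_succ]; omega
    · rw [D1_ph3 hbV, hb, pow_succ]; omega

/-- evaluate `lap` from an explicit 4-element neighborhood -/
lemma lap_eq {n : ℕ} {x a b c d : Pt} (f : Pt → ℝ)
    (h : Nb n x = {a, b, c, d}) (hab : a ≠ b) (hac : a ≠ c) (had : a ≠ d)
    (hbc : b ≠ c) (hbd : b ≠ d) (hcd : c ≠ d) :
    lap n f x = 4 * f x - (f a + f b + f c + f d) := by
  have key : (∑ᶠ (y : Pt) (_ : (SG n).Adj x y), f y) = f a + f b + f c + f d := by
    have h1 : (∑ᶠ (y : Pt) (_ : (SG n).Adj x y), f y) = ∑ᶠ y ∈ Nb n x, f y := rfl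
    rw [h1, h]
    have h2 : ({a, b, c, d} : Set Pt) = (↑({a, b, c, d} : Finset Pt) : Set Pt) := by
      simp
    rw [h2, finsum_mem_coe_finset]
    rw [Finset.sum_insert (by simp [hab, hac, had]),
      Finset.sum_insert (by simp [hbc, hbd]),
      Finset.sum_insert (by simp [hcd]), Finset.sum_singleton]
    ring
  rw [lap, key]
lemma n2u2u3 : (2:ℝ)•u2 - u3 ∉ T := by
  intro h
  obtain ⟨_, h2, _⟩ := h
  simp only [u2, u3, Prod.smul_fst, Prod.smul_snd, smul_eq_mul,
    Prod.fst_sub, Prod.snd_sub] at h2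
  have := s3_pos; nlinarith

lemma half_of_dbl {x y : Pt} (h : (2:ℝ) • x = y) : x = ph1 y := by
  rw [← h, ph1, inv_smul_smul₀ two_ne_zero]
lemma half_of_dbl2 {x y : Pt} (h : (2:ℝ) • x - u3 = y) : x = ph2 y := by
  have : (2:ℝ) • x = u3 + y := by rw [← h]; abel
  rw [ph2, ← this, inv_smul_smul₀ two_ne_zero]
lemma half_of_dbl3 {x y : Pt} (h : (2:ℝ) • x - u2 = y) : x = ph3 y := by
  have : (2:ℝ) • x = u2 + y := by rw [← h]; abel
  rw [ph3, ← this, inv_smul_smul₀ two_ne_zero]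

lemma ph1_u1 : ph1 u1 = u1 := by rw [ph1_def]; simp [u1]
lemma ph2_u3 : ph2 u3 = u3 := by
  rw [ph2_def]; simp only [u3, Prod.ext_iff]; norm_num
lemma ph3_u2 : ph3 u2 = u2 := by
  rw [ph3_def]; simp only [u2, Prod.ext_iff]; norm_num

lemma M_param : ∀ (n : ℕ) (a b c a' b' c' : ℕ) (x : Pt),
    x ≠ u1 → x ≠ u2 → x ≠ u3 → M n a b c x = M n a' b' c' x := by
  intro n
  induction n using Nat.strong_induction_on with
  | _ n ih =>
    match n with
    | 0 => intros; rfl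
    | 1 =>
      intro a b c a' b' c' x h1 h2 h3
      show (if x = u1 then a else if x = u3 then b else if x = u2 then c
        else if x = mAB then 3 else if x = mBC then 2 else if x = mCA then 3 else 0) = _
      rw [if_neg h1, if_neg h3, if_neg h2]
      show _ = (if x = u1 then a' else if x = u3 then b' else if x = u2 then c'
        else if x = mAB then 3 else if x = mBC then 2 else if x = mCA then 3 else 0)
      rw [if_neg h1, if_neg h3, if_neg h2]
    | (m+2) =>
      intro a b c a' b' c' x h1 h2 h3
      show (if x = u1 then a else if x = u3 then b else if x = u2 then c
        else if x = mAB then 3 else if x = mBC then 2 else if x = mCA then 3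
        else if (2:ℝ) • x ∈ V (m+1) then M (m+1) a 3 3 ((2:ℝ) • x)
        else if (2:ℝ) • x - u3 ∈ V (m+1) then M (m+1) 3 b 2 ((2:ℝ) • x - u3)
        else if (2:ℝ) • x - u2 ∈ V (m+1) then M (m+1) 3 2 c ((2:ℝ) • x - u2)
        else 0) =
        (if x = u1 then a' else if x = u3 then b' else if x = u2 then c'
        else if x = mAB then 3 else if x = mBC then 2 else if x = mCA then 3
        else if (2:ℝ) • x ∈ V (m+1) then M (m+1) a' 3 3 ((2:ℝ) • x)
        else if (2:ℝ) • x - u3 ∈ V (m+1) then M (m+1) 3 b' 2 ((2:ℝ) • x - u3)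
        else if (2:ℝ) • x - u2 ∈ V (m+1) then M (m+1) 3 2 c' ((2:ℝ) • x - u2)
        else 0)
      rw [if_neg h1, if_neg h3, if_neg h2, if_neg h1, if_neg h3, if_neg h2]
      by_cases hA : x = mAB
      · rw [if_pos hA, if_pos hA]
      rw [if_neg hA, if_neg hA]
      by_cases hB : x = mBC
      · rw [if_pos hB, if_pos hB]
      rw [if_neg hB, if_neg hB]
      by_cases hC : x = mCA
      · rw [if_pos hC, if_pos hC]
      rw [if_neg hC, if_neg hC]
      by_cases hv1 : (2:ℝ) • x ∈ V (m+1)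
      · rw [if_pos hv1, if_pos hv1]
        apply ih (m+1) (by omega)
        · intro h; exact h1 (by rw [half_of_dbl h, ph1_u1])
        · intro h; exact hC (by rw [half_of_dbl h, ← mCA_eq1])
        · intro h; exact hA (by rw [half_of_dbl h, ← mAB_eq1])
      rw [if_neg hv1, if_neg hv1]
      by_cases hv2 : (2:ℝ) • x - u3 ∈ V (m+1)
      · rw [if_pos hv2, if_pos hv2]
        apply ih (m+1) (by omega)
        · intro h; exact hA (by rw [half_of_dbl2 h, ← mAB_eq2])
        · intro h; exact hB (by rw [half_of_dbl2 h, ← mBC_eq2])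
        · intro h; exact h3 (by rw [half_of_dbl2 h, ph2_u3])
      rw [if_neg hv2, if_neg hv2]
      by_cases hv3 : (2:ℝ) • x - u2 ∈ V (m+1)
      · rw [if_pos hv3, if_pos hv3]
        apply ih (m+1) (by omega)
        · intro h; exact hC (by rw [half_of_dbl3 h, ← mCA_eq3])
        · intro h; exact h2 (by rw [half_of_dbl3 h, ph3_u2])
        · intro h; exact hB (by rw [half_of_dbl3 h, ← mBC_eq3])
      rw [if_neg hv3, if_neg hv3]

/-- Evaluation of `M` at midpoints and on copies, for levels `≥ 1`. -/
lemma M_mAB (n : ℕ) (a b c : ℕ) : M (n+1) a b c mAB = 3 := by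
  match n with
  | 0 =>
    show (if mAB = u1 then a else if mAB = u3 then b else if mAB = u2 then c
      else if mAB = mAB then 3 else if mAB = mBC then 2 else if mAB = mCA then 3 else 0) = 3
    rw [if_neg mAB_ne_u1, if_neg mAB_ne_u3, if_neg mAB_ne_u2, if_pos rfl]
  | (m+1) =>
    show (if mAB = u1 then a else if mAB = u3 then b else if mAB = u2 then c
      else if mAB = mAB then 3 else _ ) = 3
    rw [if_neg mAB_ne_u1, if_neg mAB_ne_u3, if_neg mAB_ne_u2, if_pos rfl]
lemma M_mBC (n : ℕ) (a b c : ℕ) : M (n+1) a b c mBC = 2 := by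
  match n with
  | 0 =>
    show (if mBC = u1 then a else if mBC = u3 then b else if mBC = u2 then c
      else if mBC = mAB then 3 else if mBC = mBC then 2 else if mBC = mCA then 3 else 0) = 2
    rw [if_neg mBC_ne_u1, if_neg mBC_ne_u3, if_neg mBC_ne_u2, if_neg mAB_ne_mBC.symm,
      if_pos rfl]
  | (m+1) =>
    show (if mBC = u1 then a else if mBC = u3 then b else if mBC = u2 then c
      else if mBC = mAB then 3 else if mBC = mBC then 2 else _) = 2
    rw [if_neg mBC_ne_u1, if_neg mBC_ne_u3, if_neg mBC_ne_u2, if_neg mAB_ne_mBC.symm,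
      if_pos rfl]
lemma M_mCA (n : ℕ) (a b c : ℕ) : M (n+1) a b c mCA = 3 := by
  match n with
  | 0 =>
    show (if mCA = u1 then a else if mCA = u3 then b else if mCA = u2 then c
      else if mCA = mAB then 3 else if mCA = mBC then 2 else if mCA = mCA then 3 else 0) = 3
    rw [if_neg mCA_ne_u1, if_neg mCA_ne_u3, if_neg mCA_ne_u2, if_neg mAB_ne_mCA.symm,
      if_neg mBC_ne_mCA.symm, if_pos rfl]
  | (m+1) =>
    show (if mCA = u1 then a else if mCA = u3 then b else if mCA = u2 then c
      else if mCA = mAB then 3 else if mCA = mBC then 2 else if mCA = mCA then 3 else _) = 3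
    rw [if_neg mCA_ne_u1, if_neg mCA_ne_u3, if_neg mCA_ne_u2, if_neg mAB_ne_mCA.symm,
      if_neg mBC_ne_mCA.symm, if_pos rfl]

section Meval
variable {m : ℕ} {z : Pt} (a b c : ℕ)

lemma M_ph1 (hz : z ∈ V (m+1)) (h1 : ph1 z ≠ u1) (hA : ph1 z ≠ mAB) (hC : ph1 z ≠ mCA) :
    M (m+2) a b c (ph1 z) = M (m+1) a 3 3 z := by
  have h3 : ph1 z ≠ u3 := by
    intro h
    apply n2u3 (by rw [← h, dbl_ph1]; exact V_subset_T _ hz : (2:ℝ)•u3 ∈ T)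
  have h2 : ph1 z ≠ u2 := by
    intro h
    apply n2u2 (by rw [← h, dbl_ph1]; exact V_subset_T _ hz : (2:ℝ)•u2 ∈ T)
  have hB : ph1 z ≠ mBC := by
    intro h
    apply nT_u2au3
    have : (2:ℝ)•mBC = u2 + u3 := by
      rw [mBC]; rw [smul_inv_smul₀ two_ne_zero]; abel
    rw [← h, dbl_ph1] at this
    rw [← this]; exact V_subset_T _ hz
  show (if ph1 z = u1 then a else if ph1 z = u3 then b else if ph1 z = u2 then c
    else if ph1 z = mAB then 3 else if ph1 z = mBC then 2 else if ph1 z = mCA then 3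
    else if (2:ℝ) • (ph1 z) ∈ V (m+1) then M (m+1) a 3 3 ((2:ℝ) • ph1 z)
    else if (2:ℝ) • (ph1 z) - u3 ∈ V (m+1) then M (m+1) 3 b 2 ((2:ℝ) • ph1 z - u3)
    else if (2:ℝ) • (ph1 z) - u2 ∈ V (m+1) then M (m+1) 3 2 c ((2:ℝ) • ph1 z - u2)
    else 0) = M (m+1) a 3 3 z
  rw [if_neg h1, if_neg h3, if_neg h2, if_neg hA, if_neg hB, if_neg hC, dbl_ph1, if_pos hz]

lemma M_ph2 (hz : z ∈ V (m+1)) (h3 : ph2 z ≠ u3) (hA : ph2 z ≠ mAB) (hB : ph2 z ≠ mBC) :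
    M (m+2) a b c (ph2 z) = M (m+1) 3 b 2 z := by
  have hzu1 : z ≠ u1 := by
    intro h; apply hA; rw [h, ← mAB_eq2]
  have hzu2 : z ≠ u2 := by
    intro h; apply hB; rw [h, ← mBC_eq2]
  have h1 : ph2 z ≠ u1 := by
    intro h
    have : u3 + z = u1 := by rw [← dbl_ph2 z, h, dbl_u1]
    have hz3 : z = u1 - u3 := by rw [← this]; abel
    have : u1 - u3 ∈ T := hz3 ▸ V_subset_T _ hz
    obtain ⟨_, h2', _⟩ := this
    simp only [u1, u3, Prod.fst_sub, Prod.snd_sub] at h2'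
    have := s3_pos; nlinarith
  have h2 : ph2 z ≠ u2 := by
    intro h
    have h' : u3 + z = (2:ℝ)•u2 := by rw [← dbl_ph2 z, h]
    have hz3 : z = (2:ℝ)•u2 - u3 := by rw [← h']; abel
    apply n2u2u3 (hz3 ▸ V_subset_T _ hz)
  have hC : ph2 z ≠ mCA := by
    intro h
    have h' : u3 + z = u2 := by
      rw [← dbl_ph2 z, h, mCA]; rw [smul_inv_smul₀ two_ne_zero, u2_add_u1]
    have hz3 : z = u2 - u3 := by rw [← h']; abel
    exact nT_u2u3 (hz3 ▸ V_subset_T _ hz)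
  have hv1 : ¬ ((2:ℝ) • (ph2 z) ∈ V (m+1)) := by
    rw [dbl_ph2]
    intro hv
    exact hzu1 (T_cap3 (V_subset_T _ hz) (V_subset_T _ hv))
  show (if ph2 z = u1 then a else if ph2 z = u3 then b else if ph2 z = u2 then c
    else if ph2 z = mAB then 3 else if ph2 z = mBC then 2 else if ph2 z = mCA then 3
    else if (2:ℝ) • (ph2 z) ∈ V (m+1) then M (m+1) a 3 3 ((2:ℝ) • ph2 z)
    else if (2:ℝ) • (ph2 z) - u3 ∈ V (m+1) then M (m+1) 3 b 2 ((2:ℝ) • ph2 z - u3)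
    else if (2:ℝ) • (ph2 z) - u2 ∈ V (m+1) then M (m+1) 3 2 c ((2:ℝ) • ph2 z - u2)
    else 0) = M (m+1) 3 b 2 z
  rw [if_neg h1, if_neg h3, if_neg h2, if_neg hA, if_neg hB, if_neg hC, if_neg hv1]
  have hsub : (2:ℝ) • (ph2 z) - u3 = z := by rw [dbl_ph2]; abel
  rw [hsub, if_pos hz]

lemma M_ph3 (hz : z ∈ V (m+1)) (h2 : ph3 z ≠ u2) (hB : ph3 z ≠ mBC) (hC : ph3 z ≠ mCA) :
    M (m+2) a b c (ph3 z) = M (m+1) 3 2 c z := by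
  have hzu1 : z ≠ u1 := by
    intro h; apply hC; rw [h, ← mCA_eq3]
  have hzu3 : z ≠ u3 := by
    intro h; apply hB; rw [h, ← mBC_eq3]
  have h1 : ph3 z ≠ u1 := by
    intro h
    have : u2 + z = u1 := by rw [← dbl_ph3 z, h, dbl_u1]
    have hz3 : z = u1 - u2 := by rw [← this]; abel
    have : u1 - u2 ∈ T := hz3 ▸ V_subset_T _ hz
    obtain ⟨h1', _, _⟩ := this
    simp only [u1, u2, Prod.fst_sub, Prod.snd_sub] at h1'
    have := s3_pos; nlinarith
  have h3 : ph3 z ≠ u3 := by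
    intro h
    have h' : u2 + z = (2:ℝ)•u3 := by rw [← dbl_ph3 z, h]
    have hz3 : z = (2:ℝ)•u3 - u2 := by rw [← h']; abel
    exact n2u3u2 (hz3 ▸ V_subset_T _ hz)
  have hA : ph3 z ≠ mAB := by
    intro h
    have h' : u2 + z = u3 := by
      rw [← dbl_ph3 z, h, mAB]; rw [smul_inv_smul₀ two_ne_zero]
      simp [u1, u3, Prod.ext_iff]
    have hz3 : z = u3 - u2 := by rw [← h']; abel
    exact nT_u3u2 (hz3 ▸ V_subset_T _ hz)
  have hv1 : ¬ ((2:ℝ) • (ph3 z) ∈ V (m+1)) := by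
    rw [dbl_ph3]
    intro hv
    exact hzu1 (T_cap2 (V_subset_T _ hz) (V_subset_T _ hv))
  have hv2 : ¬ ((2:ℝ) • (ph3 z) - u3 ∈ V (m+1)) := by
    rw [dbl_ph3]
    intro hv
    have heq : u2 + z = u3 + (u2 + z - u3) := by abel
    have := T_cap23 (V_subset_T _ hz) (V_subset_T _ hv) heq
    exact hzu3 this.1
  show (if ph3 z = u1 then a else if ph3 z = u3 then b else if ph3 z = u2 then c
    else if ph3 z = mAB then 3 else if ph3 z = mBC then 2 else if ph3 z = mCA then 3
    else if (2:ℝ) • (ph3 z) ∈ V (m+1) then M (m+1) a 3 3 ((2:ℝ) • ph3 z)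
    else if (2:ℝ) • (ph3 z) - u3 ∈ V (m+1) then M (m+1) 3 b 2 ((2:ℝ) • ph3 z - u3)
    else if (2:ℝ) • (ph3 z) - u2 ∈ V (m+1) then M (m+1) 3 2 c ((2:ℝ) • ph3 z - u2)
    else 0) = M (m+1) 3 2 c z
  rw [if_neg h1, if_neg h3, if_neg h2, if_neg hA, if_neg hB, if_neg hC, if_neg hv1, if_neg hv2]
  have hsub : (2:ℝ) • (ph3 z) - u2 = z := by rw [dbl_ph3]; abel
  rw [hsub, if_pos hz]

end Meval
lemma nb_rho (n : ℕ) (x : Pt) : Nb n (rotccw x) = rotccw '' Nb n x := by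
  ext y
  constructor
  · intro hy
    have h1 : (SG n).Adj (rotccw x) y := hy
    have h2 := rho_adj n _ _ (rho_adj n _ _ h1)
    rw [rho3] at h2
    exact ⟨rotccw (rotccw y), h2, by rw [rho3]⟩
  · rintro ⟨w, hw, rfl⟩
    exact rho_adj n _ _ hw

lemma pair_cases {a b c d : Pt} (h : ({a, b} : Set Pt) = {c, d}) (hab : a ≠ b) :
    (a = c ∧ b = d) ∨ (a = d ∧ b = c) := by
  have ha : a = c ∨ a = d := by
    have : a ∈ ({c, d} : Set Pt) := h ▸ Set.mem_insert _ _
    simpa using this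
  have hb : b = c ∨ b = d := by
    have : b ∈ ({c, d} : Set Pt) := h ▸ Set.mem_insert_iff.2 (Or.inr rfl)
    simpa using this
  rcases ha with rfl | rfl
  · rcases hb with rfl | rfl
    · exact absurd rfl hab
    · exact Or.inl ⟨rfl, rfl⟩
  · rcases hb with rfl | rfl
    · exact Or.inr ⟨rfl, rfl⟩
    · exact absurd rfl hab

lemma rho2_u1 : rotccw (rotccw u1) = u2 := by rw [rho_u1, rho_u3]
lemma rho2_u2 : rotccw (rotccw u2) = u3 := by rw [rho_u2, rho_u1]
lemma rho2_u3 : rotccw (rotccw u3) = u1 := by rw [rho_u3, rho_u2]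

lemma D1_mAB (n : ℕ) : D1 (n+1) mAB = 2^n := by
  rw [mAB_eq1, D1_ph1 (u3_mem_V n), D1_u3]
lemma D1_mCA (n : ℕ) : D1 (n+1) mCA = 2^n := by
  rw [mCA_eq1, D1_ph1 (u2_mem_V n), D1_u2]
lemma D1_mBC (n : ℕ) : D1 (n+1) mBC = 2^n + 2^n := by
  rw [mBC_eq2, D1_ph2 (u2_mem_V n), D1_u2]
lemma dc_mAB (n : ℕ) : dcorner (n+1) mAB = 2^n := by
  rw [mAB_eq1, dcorner_ph1 (u3_mem_V n), D1_u3]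
lemma dc_mCA (n : ℕ) : dcorner (n+1) mCA = 2^n := by
  rw [mCA_eq1, dcorner_ph1 (u2_mem_V n), D1_u2]
lemma dc_mBC (n : ℕ) : dcorner (n+1) mBC = 2^n := by
  rw [mBC_eq2, dcorner_ph2 (u2_mem_V n), rho_u2, rho_u1, D1_u3]

lemma cast_pow_sub_one (n : ℕ) : ((2^n - 1 : ℕ) : ℝ) = 2^n - 1 := by
  rw [Nat.cast_sub Nat.one_le_two_pow]
  push_cast
  ring

/-- sum of `D1` over a transported corner neighborhood -/
lemma rho_pair_sum {n : ℕ} {c d : Pt} (hcd : c ≠ d)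
    {w : Pt} (hw : Nb n w = {rotccw c, rotccw d})
    {p q : Pt} (hpq : p ≠ q) (hnb : Nb n w = {p, q})
    (hp : D1 n p = 2^n - 1) (hq : D1 n q = 2^n) :
    (D1 n (rotccw c) : ℝ) + D1 n (rotccw d) = 2 * 2^n - 1 := by
  have hkey : ({p, q} : Set Pt) = {rotccw c, rotccw d} := hnb.symm.trans hw
  rcases pair_cases hkey hpq with ⟨h1, h2⟩ | ⟨h1, h2⟩
  · rw [← h1, ← h2, hp, hq, cast_pow_sub_one]; push_cast; ring
  · rw [← h2, ← h1, hp, hq, cast_pow_sub_one]; push_cast; ring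

lemma quad_mAB (n : ℕ) : ∃ a b c d : Pt,
    a ≠ b ∧ a ≠ c ∧ a ≠ d ∧ b ≠ c ∧ b ≠ d ∧ c ≠ d ∧
    Nb (n+1) mAB = {a, b, c, d} ∧
    ((D1 (n+1) a : ℝ) + D1 (n+1) b + D1 (n+1) c + D1 (n+1) d = 4 * 2^n + 1) ∧
    ((dcorner (n+1) a : ℝ) + dcorner (n+1) b + dcorner (n+1) c + dcorner (n+1) d
      = 4 * 2^n - 2) := by
  obtain ⟨a, b, hab, h3nb, ha, hb⟩ := cn3 n
  obtain ⟨c, d, hcd, h1nb, hc, hd⟩ := cn1 n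
  have haN : a ∈ Nb n u3 := by rw [h3nb]; exact Set.mem_insert _ _
  have hbN : b ∈ Nb n u3 := by rw [h3nb]; exact Set.mem_insert_iff.2 (Or.inr rfl)
  have hcN : c ∈ Nb n u1 := by rw [h1nb]; exact Set.mem_insert _ _
  have hdN : d ∈ Nb n u1 := by rw [h1nb]; exact Set.mem_insert_iff.2 (Or.inr rfl)
  have haV := nb_mem_V haN; have hbV := nb_mem_V hbN
  have hcV := nb_mem_V hcN; have hdV := nb_mem_V hdN
  have cross : ∀ p q : Pt, p ∈ V n → q ∈ Nb n u1 → ph1 p ≠ ph2 q := by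
    intro p q hpV hqN he
    have : p = u3 + q := eq12 he
    have hq1 : q = u1 := T_cap3 (V_subset_T n (nb_mem_V hqN))
      (by rw [← this]; exact V_subset_T n hpV)
    exact (mem_Nb.1 hqN).ne' hq1
  refine ⟨ph1 a, ph1 b, ph2 c, ph2 d, fun h => hab (ph1_inj h),
    cross a c haV hcN, cross a d haV hdN, cross b c hbV hcN, cross b d hbV hdN,
    fun h => hcd (ph2_inj h), ?_, ?_, ?_⟩
  · rw [nb_mAB n, h3nb, h1nb, image_pair, image_pair, Set.insert_union,
      Set.singleton_union]
  · rw [D1_ph1 haV, D1_ph1 hbV, D1_ph2 hcV, D1_ph2 hdV, ha, hb, hc, hd,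
      cast_pow_sub_one]
    push_cast; ring
  · rw [dcorner_ph1 haV, dcorner_ph1 hbV, dcorner_ph2 hcV, dcorner_ph2 hdV,
      ha, hb, cast_pow_sub_one]
    have hw : Nb n u2 = {rotccw (rotccw c), rotccw (rotccw d)} := by
      rw [← rho2_u1, nb_rho, nb_rho, h1nb, image_pair, image_pair]
    obtain ⟨p, q, hpq, h2nb, hp, hq⟩ := cn2 n
    have hs := rho_pair_sum (c := rotccw c) (d := rotccw d)
      (fun h => hcd (rho_inj h)) hw hpq h2nb hp hq
    push_cast
    push_cast at hs
    linarith [hs]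

lemma quad_mCA (n : ℕ) : ∃ a b c d : Pt,
    a ≠ b ∧ a ≠ c ∧ a ≠ d ∧ b ≠ c ∧ b ≠ d ∧ c ≠ d ∧
    Nb (n+1) mCA = {a, b, c, d} ∧
    ((D1 (n+1) a : ℝ) + D1 (n+1) b + D1 (n+1) c + D1 (n+1) d = 4 * 2^n + 1) ∧
    ((dcorner (n+1) a : ℝ) + dcorner (n+1) b + dcorner (n+1) c + dcorner (n+1) d
      = 4 * 2^n - 2) := by
  obtain ⟨a, b, hab, h2nb, ha, hb⟩ := cn2 n
  obtain ⟨c, d, hcd, h1nb, hc, hd⟩ := cn1 n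
  have haN : a ∈ Nb n u2 := by rw [h2nb]; exact Set.mem_insert _ _
  have hbN : b ∈ Nb n u2 := by rw [h2nb]; exact Set.mem_insert_iff.2 (Or.inr rfl)
  have hcN : c ∈ Nb n u1 := by rw [h1nb]; exact Set.mem_insert _ _
  have hdN : d ∈ Nb n u1 := by rw [h1nb]; exact Set.mem_insert_iff.2 (Or.inr rfl)
  have haV := nb_mem_V haN; have hbV := nb_mem_V hbN
  have hcV := nb_mem_V hcN; have hdV := nb_mem_V hdN
  have cross : ∀ p q : Pt, p ∈ V n → q ∈ Nb n u1 → ph1 p ≠ ph3 q := by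
    intro p q hpV hqN he
    have : p = u2 + q := eq13 he
    have hq1 : q = u1 := T_cap2 (V_subset_T n (nb_mem_V hqN))
      (by rw [← this]; exact V_subset_T n hpV)
    exact (mem_Nb.1 hqN).ne' hq1
  refine ⟨ph1 a, ph1 b, ph3 c, ph3 d, fun h => hab (ph1_inj h),
    cross a c haV hcN, cross a d haV hdN, cross b c hbV hcN, cross b d hbV hdN,
    fun h => hcd (ph3_inj h), ?_, ?_, ?_⟩
  · rw [nb_mCA n, h2nb, h1nb, image_pair, image_pair, Set.insert_union,
      Set.singleton_union]
  · rw [D1_ph1 haV, D1_ph1 hbV, D1_ph3 hcV, D1_ph3 hdV, ha, hb, hc, hd,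
      cast_pow_sub_one]
    push_cast; ring
  · rw [dcorner_ph1 haV, dcorner_ph1 hbV, dcorner_ph3 hcV, dcorner_ph3 hdV,
      ha, hb, cast_pow_sub_one]
    have hw : Nb n u3 = {rotccw c, rotccw d} := by
      rw [← rho_u1, nb_rho, h1nb, image_pair]
    obtain ⟨p, q, hpq, h3nb, hp, hq⟩ := cn3 n
    have hs := rho_pair_sum hcd hw hpq h3nb hp hq
    push_cast
    push_cast at hs
    linarith [hs]

lemma quad_mBC (n : ℕ) : ∃ a b c d : Pt,
    a ≠ b ∧ a ≠ c ∧ a ≠ d ∧ b ≠ c ∧ b ≠ d ∧ c ≠ d ∧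
    Nb (n+1) mBC = {a, b, c, d} ∧
    ((D1 (n+1) a : ℝ) + D1 (n+1) b + D1 (n+1) c + D1 (n+1) d = 8 * 2^n - 2) ∧
    ((dcorner (n+1) a : ℝ) + dcorner (n+1) b + dcorner (n+1) c + dcorner (n+1) d
      = 4 * 2^n - 2) := by
  obtain ⟨a, b, hab, h2nb, ha, hb⟩ := cn2 n
  obtain ⟨c, d, hcd, h3nb, hc, hd⟩ := cn3 n
  have haN : a ∈ Nb n u2 := by rw [h2nb]; exact Set.mem_insert _ _
  have hbN : b ∈ Nb n u2 := by rw [h2nb]; exact Set.mem_insert_iff.2 (Or.inr rfl)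
  have hcN : c ∈ Nb n u3 := by rw [h3nb]; exact Set.mem_insert _ _
  have hdN : d ∈ Nb n u3 := by rw [h3nb]; exact Set.mem_insert_iff.2 (Or.inr rfl)
  have haV := nb_mem_V haN; have hbV := nb_mem_V hbN
  have hcV := nb_mem_V hcN; have hdV := nb_mem_V hdN
  have cross : ∀ p q : Pt, p ∈ V n → q ∈ Nb n u3 → ph2 p ≠ ph3 q := by
    intro p q hpV hqN he
    have heq : u2 + q = u3 + p := eq32 he.symm
    have := T_cap23 (V_subset_T n (nb_mem_V hqN)) (V_subset_T n hpV) heq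
    exact (mem_Nb.1 hqN).ne' this.1
  refine ⟨ph2 a, ph2 b, ph3 c, ph3 d, fun h => hab (ph2_inj h),
    cross a c haV hcN, cross a d haV hdN, cross b c hbV hcN, cross b d hbV hdN,
    fun h => hcd (ph3_inj h), ?_, ?_, ?_⟩
  · rw [nb_mBC n, h2nb, h3nb, image_pair, image_pair, Set.insert_union,
      Set.singleton_union]
  · rw [D1_ph2 haV, D1_ph2 hbV, D1_ph3 hcV, D1_ph3 hdV, ha, hb, hc, hd]
    have h1 : (1:ℕ) ≤ 2^n := Nat.one_le_two_pow
    push_cast [h1]; ring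
  · rw [dcorner_ph2 haV, dcorner_ph2 hbV, dcorner_ph3 hcV, dcorner_ph3 hdV]
    -- a,b ∈ Nb u2 : rotccw² maps to Nb u3 ; c,d ∈ Nb u3 : rotccw maps to Nb u2
    have hw1 : Nb n u3 = {rotccw (rotccw a), rotccw (rotccw b)} := by
      rw [← rho2_u2, nb_rho, nb_rho, h2nb, image_pair, image_pair]
    obtain ⟨p, q, hpq, h3nb', hp, hq⟩ := cn3 n
    have s1 := rho_pair_sum (c := rotccw a) (d := rotccw b)
      (fun h => hab (rho_inj h)) hw1 hpq h3nb' hp hq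
    have hw2 : Nb n u2 = {rotccw c, rotccw d} := by
      rw [← rho_u3, nb_rho, h3nb, image_pair]
    obtain ⟨p', q', hpq', h2nb', hp', hq'⟩ := cn2 n
    have s2 := rho_pair_sum hcd hw2 hpq' h2nb' hp' hq'
    push_cast
    push_cast at s1 s2
    linarith [s1, s2]
lemma deg4 : ∀ n, ∀ x ∈ V n, x ≠ u1 → x ≠ u2 → x ≠ u3 →
    ∃ a b c d : Pt, a ≠ b ∧ a ≠ c ∧ a ≠ d ∧ b ≠ c ∧ b ≠ d ∧ c ≠ d ∧
      Nb n x = {a, b, c, d} := by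
  intro n
  induction n with
  | zero =>
    intro x hx h1 h2 h3
    rcases hx with rfl | rfl | rfl <;> simp_all
  | succ n ih =>
    intro x hx h1 h2 h3
    by_cases hA : x = mAB
    · subst hA
      obtain ⟨a, b, c, d, d1, d2, d3, d4, d5, d6, hnb, _, _⟩ := quad_mAB n
      exact ⟨a, b, c, d, d1, d2, d3, d4, d5, d6, hnb⟩
    by_cases hB : x = mBC
    · subst hB
      obtain ⟨a, b, c, d, d1, d2, d3, d4, d5, d6, hnb, _, _⟩ := quad_mBC n
      exact ⟨a, b, c, d, d1, d2, d3, d4, d5, d6, hnb⟩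
    by_cases hC : x = mCA
    · subst hC
      obtain ⟨a, b, c, d, d1, d2, d3, d4, d5, d6, hnb, _, _⟩ := quad_mCA n
      exact ⟨a, b, c, d, d1, d2, d3, d4, d5, d6, hnb⟩
    rcases cases_V hx with ⟨z, hz, rfl⟩ | ⟨z, hz, rfl⟩ | ⟨z, hz, rfl⟩
    · have hz1 : z ≠ u1 := fun h => h1 (by rw [h, ph1_u1])
      have hz2 : z ≠ u2 := fun h => hC (by rw [h, ← mCA_eq1])
      have hz3 : z ≠ u3 := fun h => hA (by rw [h, ← mAB_eq1])
      obtain ⟨a, b, c, d, d1, d2, d3, d4, d5, d6, hnb⟩ := ih z hz hz1 hz2 hz3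
      refine ⟨ph1 a, ph1 b, ph1 c, ph1 d, fun h => d1 (ph1_inj h), fun h => d2 (ph1_inj h),
        fun h => d3 (ph1_inj h), fun h => d4 (ph1_inj h), fun h => d5 (ph1_inj h),
        fun h => d6 (ph1_inj h), ?_⟩
      rw [nb_ph1 hz hz2 hz3, hnb]
      simp [Set.image_insert_eq]
    · have hz1 : z ≠ u1 := fun h => hC (by rw [h, ← mCA_eq3])
      have hz2 : z ≠ u2 := fun h => h2 (by rw [h, ph3_u2])
      have hz3 : z ≠ u3 := fun h => hB (by rw [h, ← mBC_eq3])
      obtain ⟨a, b, c, d, d1, d2, d3, d4, d5, d6, hnb⟩ := ih z hz hz1 hz2 hz3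
      refine ⟨ph3 a, ph3 b, ph3 c, ph3 d, fun h => d1 (ph3_inj h), fun h => d2 (ph3_inj h),
        fun h => d3 (ph3_inj h), fun h => d4 (ph3_inj h), fun h => d5 (ph3_inj h),
        fun h => d6 (ph3_inj h), ?_⟩
      rw [nb_ph3 hz hz1 hz3, hnb]
      simp [Set.image_insert_eq]
    · have hz1 : z ≠ u1 := fun h => hA (by rw [h, ← mAB_eq2])
      have hz2 : z ≠ u2 := fun h => hB (by rw [h, ← mBC_eq2])
      have hz3 : z ≠ u3 := fun h => h3 (by rw [h, ph2_u3])
      obtain ⟨a, b, c, d, d1, d2, d3, d4, d5, d6, hnb⟩ := ih z hz hz1 hz2 hz3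
      refine ⟨ph2 a, ph2 b, ph2 c, ph2 d, fun h => d1 (ph2_inj h), fun h => d2 (ph2_inj h),
        fun h => d3 (ph2_inj h), fun h => d4 (ph2_inj h), fun h => d5 (ph2_inj h),
        fun h => d6 (ph2_inj h), ?_⟩
      rw [nb_ph2 hz hz1 hz2, hnb]
      simp [Set.image_insert_eq]

lemma core : ∀ n, ∀ x ∈ V n, x ≠ u1 → x ≠ u2 → x ≠ u3 →
    lap n (fun y => (D1 n y : ℝ)) x = 8 - 3 * (M n 2 2 2 x : ℝ) := by
  intro n
  induction n with
  | zero =>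
    intro x hx h1 h2 h3
    rcases hx with rfl | rfl | rfl <;> simp_all
  | succ n ih =>
    intro x hx h1 h2 h3
    by_cases hA : x = mAB
    · subst hA
      obtain ⟨a, b, c, d, d1, d2, d3, d4, d5, d6, hnb, hD1, _⟩ := quad_mAB n
      rw [lap_eq _ hnb d1 d2 d3 d4 d5 d6, hD1, M_mAB n, D1_mAB n]
      push_cast; ring
    by_cases hB : x = mBC
    · subst hB
      obtain ⟨a, b, c, d, d1, d2, d3, d4, d5, d6, hnb, hD1, _⟩ := quad_mBC n
      rw [lap_eq _ hnb d1 d2 d3 d4 d5 d6, hD1, M_mBC n, D1_mBC n]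
      push_cast; ring
    by_cases hC : x = mCA
    · subst hC
      obtain ⟨a, b, c, d, d1, d2, d3, d4, d5, d6, hnb, hD1, _⟩ := quad_mCA n
      rw [lap_eq _ hnb d1 d2 d3 d4 d5 d6, hD1, M_mCA n, D1_mCA n]
      push_cast; ring
    rcases cases_V hx with ⟨z, hz, rfl⟩ | ⟨z, hz, rfl⟩ | ⟨z, hz, rfl⟩
    · have hz1 : z ≠ u1 := fun h => h1 (by rw [h, ph1_u1])
      have hz2 : z ≠ u2 := fun h => hC (by rw [h, ← mCA_eq1])
      have hz3 : z ≠ u3 := fun h => hA (by rw [h, ← mAB_eq1])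
      obtain _ | m := n
      · rcases hz with rfl | rfl | rfl <;> simp_all
      · obtain ⟨a, b, c, d, d1, d2, d3, d4, d5, d6, hnb⟩ := deg4 (m+1) z hz hz1 hz2 hz3
        have haV : a ∈ V (m+1) := nb_mem_V (by rw [hnb]; simp)
        have hbV : b ∈ V (m+1) := nb_mem_V (by rw [hnb]; simp)
        have hcV : c ∈ V (m+1) := nb_mem_V (by rw [hnb]; simp)
        have hdV : d ∈ V (m+1) := nb_mem_V (by rw [hnb]; simp)
        have hNb : Nb (m+2) (ph1 z) = {ph1 a, ph1 b, ph1 c, ph1 d} := by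
          rw [nb_ph1 hz hz2 hz3, hnb]; simp [Set.image_insert_eq]
        rw [lap_eq _ hNb (fun h => d1 (ph1_inj h)) (fun h => d2 (ph1_inj h))
          (fun h => d3 (ph1_inj h)) (fun h => d4 (ph1_inj h)) (fun h => d5 (ph1_inj h))
          (fun h => d6 (ph1_inj h))]
        have hM : M (m+2) 2 2 2 (ph1 z) = M (m+1) 2 2 2 z := by
          rw [M_ph1 2 2 2 hz h1 hA hC]
          exact M_param (m+1) 2 3 3 2 2 2 z hz1 hz2 hz3
        rw [hM]
        have hIH := ih z hz hz1 hz2 hz3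
        rw [lap_eq _ hnb d1 d2 d3 d4 d5 d6] at hIH
        rw [D1_ph1 hz, D1_ph1 haV, D1_ph1 hbV, D1_ph1 hcV, D1_ph1 hdV]
        exact hIH
    · have hz1 : z ≠ u1 := fun h => hC (by rw [h, ← mCA_eq3])
      have hz2 : z ≠ u2 := fun h => h2 (by rw [h, ph3_u2])
      have hz3 : z ≠ u3 := fun h => hB (by rw [h, ← mBC_eq3])
      obtain _ | m := n
      · rcases hz with rfl | rfl | rfl <;> simp_all
      · obtain ⟨a, b, c, d, d1, d2, d3, d4, d5, d6, hnb⟩ := deg4 (m+1) z hz hz1 hz2 hz3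
        have haV : a ∈ V (m+1) := nb_mem_V (by rw [hnb]; simp)
        have hbV : b ∈ V (m+1) := nb_mem_V (by rw [hnb]; simp)
        have hcV : c ∈ V (m+1) := nb_mem_V (by rw [hnb]; simp)
        have hdV : d ∈ V (m+1) := nb_mem_V (by rw [hnb]; simp)
        have hNb : Nb (m+2) (ph3 z) = {ph3 a, ph3 b, ph3 c, ph3 d} := by
          rw [nb_ph3 hz hz1 hz3, hnb]; simp [Set.image_insert_eq]
        rw [lap_eq _ hNb (fun h => d1 (ph3_inj h)) (fun h => d2 (ph3_inj h))
          (fun h => d3 (ph3_inj h)) (fun h => d4 (ph3_inj h)) (fun h => d5 (ph3_inj h))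
          (fun h => d6 (ph3_inj h))]
        have hM : M (m+2) 2 2 2 (ph3 z) = M (m+1) 2 2 2 z := by
          rw [M_ph3 2 2 2 hz h2 hB hC]
          exact M_param (m+1) 3 2 2 2 2 2 z hz1 hz2 hz3
        rw [hM]
        have hIH := ih z hz hz1 hz2 hz3
        rw [lap_eq _ hnb d1 d2 d3 d4 d5 d6] at hIH
        rw [D1_ph3 hz, D1_ph3 haV, D1_ph3 hbV, D1_ph3 hcV, D1_ph3 hdV]
        push_cast at hIH ⊢
        linarith [hIH]
    · have hz1 : z ≠ u1 := fun h => hA (by rw [h, ← mAB_eq2])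
      have hz2 : z ≠ u2 := fun h => hB (by rw [h, ← mBC_eq2])
      have hz3 : z ≠ u3 := fun h => h3 (by rw [h, ph2_u3])
      obtain _ | m := n
      · rcases hz with rfl | rfl | rfl <;> simp_all
      · obtain ⟨a, b, c, d, d1, d2, d3, d4, d5, d6, hnb⟩ := deg4 (m+1) z hz hz1 hz2 hz3
        have haV : a ∈ V (m+1) := nb_mem_V (by rw [hnb]; simp)
        have hbV : b ∈ V (m+1) := nb_mem_V (by rw [hnb]; simp)
        have hcV : c ∈ V (m+1) := nb_mem_V (by rw [hnb]; simp)
        have hdV : d ∈ V (m+1) := nb_mem_V (by rw [hnb]; simp)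
        have hNb : Nb (m+2) (ph2 z) = {ph2 a, ph2 b, ph2 c, ph2 d} := by
          rw [nb_ph2 hz hz1 hz2, hnb]; simp [Set.image_insert_eq]
        rw [lap_eq _ hNb (fun h => d1 (ph2_inj h)) (fun h => d2 (ph2_inj h))
          (fun h => d3 (ph2_inj h)) (fun h => d4 (ph2_inj h)) (fun h => d5 (ph2_inj h))
          (fun h => d6 (ph2_inj h))]
        have hM : M (m+2) 2 2 2 (ph2 z) = M (m+1) 2 2 2 z := by
          rw [M_ph2 2 2 2 hz h3 hA hB]
          exact M_param (m+1) 3 2 2 2 2 2 z hz1 hz2 hz3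
        rw [hM]
        have hIH := ih z hz hz1 hz2 hz3
        rw [lap_eq _ hnb d1 d2 d3 d4 d5 d6] at hIH
        rw [D1_ph2 hz, D1_ph2 haV, D1_ph2 hbV, D1_ph2 hcV, D1_ph2 hdV]
        push_cast at hIH ⊢
        linarith [hIH]
lemma sid_special (m : ℕ) {x : Pt}
    (h : x = u1 ∨ x = u2 ∨ x = u3 ∨ x = mAB ∨ x = mBC ∨ x = mCA) :
    sandId (m+2) x = 2 := by
  show (if x = u1 ∨ x = u2 ∨ x = u3 ∨ x = mAB ∨ x = mBC ∨ x = mCA then 2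
    else if (2:ℝ) • x ∈ V (m+1) then M (m+1) 2 2 2 ((2:ℝ) • x)
    else if (2:ℝ) • x - u2 ∈ V (m+1) then M (m+1) 2 2 2 (rotccw ((2:ℝ) • x - u2))
    else if (2:ℝ) • x - u3 ∈ V (m+1) then M (m+1) 2 2 2 (rotcw ((2:ℝ) • x - u3))
    else 0) = 2
  rw [if_pos h]

lemma sid_ph1 {m : ℕ} {z : Pt} (hz : z ∈ V (m+1))
    (hns : ¬(ph1 z = u1 ∨ ph1 z = u2 ∨ ph1 z = u3 ∨ ph1 z = mAB ∨ ph1 z = mBC ∨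
      ph1 z = mCA)) :
    sandId (m+2) (ph1 z) = M (m+1) 2 2 2 z := by
  show (if _ then 2
    else if (2:ℝ) • (ph1 z) ∈ V (m+1) then M (m+1) 2 2 2 ((2:ℝ) • ph1 z)
    else if (2:ℝ) • (ph1 z) - u2 ∈ V (m+1) then M (m+1) 2 2 2 (rotccw ((2:ℝ) • ph1 z - u2))
    else if (2:ℝ) • (ph1 z) - u3 ∈ V (m+1) then M (m+1) 2 2 2 (rotcw ((2:ℝ) • ph1 z - u3))
    else 0) = M (m+1) 2 2 2 z
  rw [if_neg hns, dbl_ph1, if_pos hz]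

lemma sid_ph3 {m : ℕ} {z : Pt} (hz : z ∈ V (m+1)) (hz1 : z ≠ u1)
    (hns : ¬(ph3 z = u1 ∨ ph3 z = u2 ∨ ph3 z = u3 ∨ ph3 z = mAB ∨ ph3 z = mBC ∨
      ph3 z = mCA)) :
    sandId (m+2) (ph3 z) = M (m+1) 2 2 2 (rotccw z) := by
  have hv1 : ¬((2:ℝ) • (ph3 z) ∈ V (m+1)) := by
    rw [dbl_ph3]
    intro hv
    exact hz1 (T_cap2 (V_subset_T _ hz) (V_subset_T _ hv))
  have hsub : (2:ℝ) • (ph3 z) - u2 = z := by rw [dbl_ph3]; abel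
  show (if _ then 2
    else if (2:ℝ) • (ph3 z) ∈ V (m+1) then M (m+1) 2 2 2 ((2:ℝ) • ph3 z)
    else if (2:ℝ) • (ph3 z) - u2 ∈ V (m+1) then M (m+1) 2 2 2 (rotccw ((2:ℝ) • ph3 z - u2))
    else if (2:ℝ) • (ph3 z) - u3 ∈ V (m+1) then M (m+1) 2 2 2 (rotcw ((2:ℝ) • ph3 z - u3))
    else 0) = M (m+1) 2 2 2 (rotccw z)
  rw [if_neg hns, if_neg hv1, hsub, if_pos hz]

lemma sid_ph2 {m : ℕ} {z : Pt} (hz : z ∈ V (m+1)) (hz1 : z ≠ u1) (hz2 : z ≠ u2)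
    (hns : ¬(ph2 z = u1 ∨ ph2 z = u2 ∨ ph2 z = u3 ∨ ph2 z = mAB ∨ ph2 z = mBC ∨
      ph2 z = mCA)) :
    sandId (m+2) (ph2 z) = M (m+1) 2 2 2 (rotcw z) := by
  have hv1 : ¬((2:ℝ) • (ph2 z) ∈ V (m+1)) := by
    rw [dbl_ph2]
    intro hv
    exact hz1 (T_cap3 (V_subset_T _ hz) (V_subset_T _ hv))
  have hv2 : ¬((2:ℝ) • (ph2 z) - u2 ∈ V (m+1)) := by
    rw [dbl_ph2]
    intro hv
    have heq : u2 + (u3 + z - u2) = u3 + z := by abel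
    exact hz2 (T_cap23 (V_subset_T _ hv) (V_subset_T _ hz) heq).2
  have hsub : (2:ℝ) • (ph2 z) - u3 = z := by rw [dbl_ph2]; abel
  show (if _ then 2
    else if (2:ℝ) • (ph2 z) ∈ V (m+1) then M (m+1) 2 2 2 ((2:ℝ) • ph2 z)
    else if (2:ℝ) • (ph2 z) - u2 ∈ V (m+1) then M (m+1) 2 2 2 (rotccw ((2:ℝ) • ph2 z - u2))
    else if (2:ℝ) • (ph2 z) - u3 ∈ V (m+1) then M (m+1) 2 2 2 (rotcw ((2:ℝ) • ph2 z - u3))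
    else 0) = M (m+1) 2 2 2 (rotcw z)
  rw [if_neg hns, if_neg hv1, if_neg hv2, hsub, if_pos hz]

lemma rho_ne_corners {z : Pt} (h1 : z ≠ u1) (h2 : z ≠ u2) (h3 : z ≠ u3) :
    rotccw z ≠ u1 ∧ rotccw z ≠ u2 ∧ rotccw z ≠ u3 := by
  refine ⟨fun h => ?_, fun h => ?_, fun h => ?_⟩
  · apply h2
    have := congrArg (fun p => rotccw (rotccw p)) h
    rw [rho3, rho2_u1] at this
    exact this
  · apply h3
    have := congrArg (fun p => rotccw (rotccw p)) h
    rw [rho3, rho2_u2] at this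
    exact this
  · apply h1
    have := congrArg (fun p => rotccw (rotccw p)) h
    rw [rho3, rho2_u3] at this
    exact this


/-- For every `n ≥ 2` and every non-corner vertex `x ∈ V_{SG_n}`,
`Δ_n d_n(x) = 8 − 3·id_n(x)`. -/
theorem lap_dcorner_eq (n : ℕ) (hn : 2 ≤ n) :
    ∀ x ∈ V n, x ∉ corners →
      lap n (fun y => (dcorner n y : ℝ)) x = 8 - 3 * (sandId n x : ℝ) := by
  obtain ⟨m, rfl⟩ : ∃ m, n = m + 2 := ⟨n - 2, by omega⟩
  intro x hx hxc
  have h1 : x ≠ u1 := fun h => hxc (by rw [h]; simp [corners])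
  have h2 : x ≠ u2 := fun h => hxc (by rw [h]; simp [corners])
  have h3 : x ≠ u3 := fun h => hxc (by rw [h]; simp [corners])
  by_cases hA : x = mAB
  · subst hA
    obtain ⟨a, b, c, d, d1, d2, d3, d4, d5, d6, hnb, _, hdc⟩ := quad_mAB (m+1)
    rw [lap_eq _ hnb d1 d2 d3 d4 d5 d6, hdc, dc_mAB (m+1),
      sid_special m (Or.inr (Or.inr (Or.inr (Or.inl rfl))))]
    push_cast; ring
  by_cases hB : x = mBC
  · subst hB
    obtain ⟨a, b, c, d, d1, d2, d3, d4, d5, d6, hnb, _, hdc⟩ := quad_mBC (m+1)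
    rw [lap_eq _ hnb d1 d2 d3 d4 d5 d6, hdc, dc_mBC (m+1),
      sid_special m (Or.inr (Or.inr (Or.inr (Or.inr (Or.inl rfl)))))]
    push_cast; ring
  by_cases hC : x = mCA
  · subst hC
    obtain ⟨a, b, c, d, d1, d2, d3, d4, d5, d6, hnb, _, hdc⟩ := quad_mCA (m+1)
    rw [lap_eq _ hnb d1 d2 d3 d4 d5 d6, hdc, dc_mCA (m+1),
      sid_special m (Or.inr (Or.inr (Or.inr (Or.inr (Or.inr rfl)))))]
    push_cast; ring
  have hns : ¬(x = u1 ∨ x = u2 ∨ x = u3 ∨ x = mAB ∨ x = mBC ∨ x = mCA) := by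
    push_neg
    exact ⟨h1, h2, h3, hA, hB, hC⟩
  rcases cases_V hx with ⟨z, hz, rfl⟩ | ⟨z, hz, rfl⟩ | ⟨z, hz, rfl⟩
  · -- copy 1
    have hz1 : z ≠ u1 := fun h => h1 (by rw [h, ph1_u1])
    have hz2 : z ≠ u2 := fun h => hC (by rw [h, ← mCA_eq1])
    have hz3 : z ≠ u3 := fun h => hA (by rw [h, ← mAB_eq1])
    obtain ⟨a, b, c, d, d1, d2, d3, d4, d5, d6, hnb⟩ := deg4 (m+1) z hz hz1 hz2 hz3
    have haV : a ∈ V (m+1) := nb_mem_V (by rw [hnb]; simp)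
    have hbV : b ∈ V (m+1) := nb_mem_V (by rw [hnb]; simp)
    have hcV : c ∈ V (m+1) := nb_mem_V (by rw [hnb]; simp)
    have hdV : d ∈ V (m+1) := nb_mem_V (by rw [hnb]; simp)
    have hNb : Nb (m+2) (ph1 z) = {ph1 a, ph1 b, ph1 c, ph1 d} := by
      rw [nb_ph1 hz hz2 hz3, hnb]; simp [Set.image_insert_eq]
    rw [lap_eq _ hNb (fun h => d1 (ph1_inj h)) (fun h => d2 (ph1_inj h))
      (fun h => d3 (ph1_inj h)) (fun h => d4 (ph1_inj h)) (fun h => d5 (ph1_inj h))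
      (fun h => d6 (ph1_inj h)), sid_ph1 hz hns]
    have hcore := core (m+1) z hz hz1 hz2 hz3
    rw [lap_eq _ hnb d1 d2 d3 d4 d5 d6] at hcore
    rw [dcorner_ph1 hz, dcorner_ph1 haV, dcorner_ph1 hbV, dcorner_ph1 hcV,
      dcorner_ph1 hdV]
    exact hcore
  · -- copy 3
    have hz1 : z ≠ u1 := fun h => hC (by rw [h, ← mCA_eq3])
    have hz2 : z ≠ u2 := fun h => h2 (by rw [h, ph3_u2])
    have hz3 : z ≠ u3 := fun h => hB (by rw [h, ← mBC_eq3])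
    obtain ⟨a, b, c, d, d1, d2, d3, d4, d5, d6, hnb⟩ := deg4 (m+1) z hz hz1 hz2 hz3
    have haV : a ∈ V (m+1) := nb_mem_V (by rw [hnb]; simp)
    have hbV : b ∈ V (m+1) := nb_mem_V (by rw [hnb]; simp)
    have hcV : c ∈ V (m+1) := nb_mem_V (by rw [hnb]; simp)
    have hdV : d ∈ V (m+1) := nb_mem_V (by rw [hnb]; simp)
    have hNb : Nb (m+2) (ph3 z) = {ph3 a, ph3 b, ph3 c, ph3 d} := by
      rw [nb_ph3 hz hz1 hz3, hnb]; simp [Set.image_insert_eq]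
    rw [lap_eq _ hNb (fun h => d1 (ph3_inj h)) (fun h => d2 (ph3_inj h))
      (fun h => d3 (ph3_inj h)) (fun h => d4 (ph3_inj h)) (fun h => d5 (ph3_inj h))
      (fun h => d6 (ph3_inj h)), sid_ph3 hz hz1 hns]
    obtain ⟨r1, r2, r3⟩ := rho_ne_corners hz1 hz2 hz3
    have hcore := core (m+1) (rotccw z) (rho_mem_V _ _ hz) r1 r2 r3
    have hnbr : Nb (m+1) (rotccw z) = {rotccw a, rotccw b, rotccw c, rotccw d} := by
      rw [nb_rho, hnb]; simp [Set.image_insert_eq]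
    rw [lap_eq _ hnbr (fun h => d1 (rho_inj h)) (fun h => d2 (rho_inj h))
      (fun h => d3 (rho_inj h)) (fun h => d4 (rho_inj h)) (fun h => d5 (rho_inj h))
      (fun h => d6 (rho_inj h))] at hcore
    rw [dcorner_ph3 hz, dcorner_ph3 haV, dcorner_ph3 hbV, dcorner_ph3 hcV,
      dcorner_ph3 hdV]
    exact hcore
  · -- copy 2
    have hz1 : z ≠ u1 := fun h => hA (by rw [h, ← mAB_eq2])
    have hz2 : z ≠ u2 := fun h => hB (by rw [h, ← mBC_eq2])
    have hz3 : z ≠ u3 := fun h => h3 (by rw [h, ph2_u3])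
    obtain ⟨a, b, c, d, d1, d2, d3, d4, d5, d6, hnb⟩ := deg4 (m+1) z hz hz1 hz2 hz3
    have haV : a ∈ V (m+1) := nb_mem_V (by rw [hnb]; simp)
    have hbV : b ∈ V (m+1) := nb_mem_V (by rw [hnb]; simp)
    have hcV : c ∈ V (m+1) := nb_mem_V (by rw [hnb]; simp)
    have hdV : d ∈ V (m+1) := nb_mem_V (by rw [hnb]; simp)
    have hNb : Nb (m+2) (ph2 z) = {ph2 a, ph2 b, ph2 c, ph2 d} := by
      rw [nb_ph2 hz hz1 hz2, hnb]; simp [Set.image_insert_eq]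
    rw [lap_eq _ hNb (fun h => d1 (ph2_inj h)) (fun h => d2 (ph2_inj h))
      (fun h => d3 (ph2_inj h)) (fun h => d4 (ph2_inj h)) (fun h => d5 (ph2_inj h))
      (fun h => d6 (ph2_inj h)), sid_ph2 hz hz1 hz2 hns]
    obtain ⟨r1, r2, r3⟩ := rho_ne_corners hz1 hz2 hz3
    obtain ⟨s1, s2, s3⟩ := rho_ne_corners r1 r2 r3
    have hcore := core (m+1) (rotccw (rotccw z))
      (rho_mem_V _ _ (rho_mem_V _ _ hz)) s1 s2 s3
    have hnbr : Nb (m+1) (rotccw (rotccw z)) =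
        {rotccw (rotccw a), rotccw (rotccw b), rotccw (rotccw c), rotccw (rotccw d)} := by
      rw [nb_rho, nb_rho, hnb]; simp [Set.image_insert_eq]
    rw [lap_eq _ hnbr (fun h => d1 (rho_inj (rho_inj h))) (fun h => d2 (rho_inj (rho_inj h)))
      (fun h => d3 (rho_inj (rho_inj h))) (fun h => d4 (rho_inj (rho_inj h)))
      (fun h => d5 (rho_inj (rho_inj h))) (fun h => d6 (rho_inj (rho_inj h)))] at hcore
    rw [dcorner_ph2 hz, dcorner_ph2 haV, dcorner_ph2 hbV, dcorner_ph2 hcV,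
      dcorner_ph2 hdV, rotcw_eq]
    exact hcore
end
end

section
/- There exists a constant c > 0 such that for every n and all x,y,z ∈ V_{SG_n} with x ∼_n y, the Green function satisfies |g_n(x,z) − g_n(y,z)| ≤ c (a uniform bound over all levels n, reflecting the Hölder continuity of the limiting Green function on the gasket). -/
open scoped Classical BigOperators ENNReal

noncomputable section

namespace SGaux

lemma s3_pos : 0 < Real.sqrt 3 := Real.sqrt_pos.2 (by norm_num)
lemma s3_sq : Real.sqrt 3 * Real.sqrt 3 = 3 := Real.mul_self_sqrt (by norm_num)

def phi1 (p : Pt) : Pt := (2:ℝ)⁻¹ • p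
def phi2 (p : Pt) : Pt := (2:ℝ)⁻¹ • (u2 + p)
def phi3 (p : Pt) : Pt := (2:ℝ)⁻¹ • (u3 + p)

lemma phi1_eq (p : Pt) : phi1 p = (p.1 / 2, p.2 / 2) := by
  simp [phi1, Prod.ext_iff, smul_eq_mul]; constructor <;> ring

lemma phi2_eq (p : Pt) : phi2 p = ((1/2 + p.1) / 2, (Real.sqrt 3 / 2 + p.2) / 2) := by
  simp [phi2, u2, Prod.ext_iff, smul_eq_mul]; constructor <;> ring

lemma phi3_eq (p : Pt) : phi3 p = ((1 + p.1) / 2, p.2 / 2) := by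
  simp [phi3, u3, Prod.ext_iff, smul_eq_mul]; constructor <;> ring

lemma phi1_inj : Function.Injective phi1 := fun p q h => by
  simp [phi1_eq, Prod.ext_iff] at h ⊢; constructor <;> [linarith [h.1]; linarith [h.2]]
lemma phi2_inj : Function.Injective phi2 := fun p q h => by
  simp [phi2_eq, Prod.ext_iff] at h ⊢; constructor <;> [linarith [h.1]; linarith [h.2]]
lemma phi3_inj : Function.Injective phi3 := fun p q h => by
  simp [phi3_eq, Prod.ext_iff] at h ⊢; constructor <;> [linarith [h.1]; linarith [h.2]]

lemma V_succ (n : ℕ) : V (n+1) = phi1 '' V n ∪ phi2 '' V n ∪ phi3 '' V n := by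
  show (fun p : Pt => (2:ℝ)⁻¹ • p) '' _ = _
  rw [Set.image_union, Set.image_union, Set.image_image, Set.image_image]
  rfl

lemma Ed_succ (n : ℕ) : Ed (n+1) =
    (fun q : Pt × Pt => (phi1 q.1, phi1 q.2)) '' Ed n ∪
    (fun q : Pt × Pt => (phi2 q.1, phi2 q.2)) '' Ed n ∪
    (fun q : Pt × Pt => (phi3 q.1, phi3 q.2)) '' Ed n := by
  show (fun q : Pt × Pt => ((2:ℝ)⁻¹ • q.1, (2:ℝ)⁻¹ • q.2)) '' _ = _
  rw [Set.image_union, Set.image_union, Set.image_image, Set.image_image]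
  rfl

def Tri : Set Pt := {p | 0 ≤ p.2 ∧ p.2 ≤ Real.sqrt 3 * p.1 ∧ p.2 ≤ Real.sqrt 3 * (1 - p.1)}

lemma u1_mem_Tri : u1 ∈ Tri := by simp [Tri, u1]
lemma u2_mem_Tri : u2 ∈ Tri := by
  simp only [Tri, u2, Set.mem_setOf_eq]
  refine ⟨by positivity, by nlinarith [s3_pos], by nlinarith [s3_pos]⟩
lemma u3_mem_Tri : u3 ∈ Tri := by simp [Tri, u3]

lemma V_subset_Tri : ∀ n, V n ⊆ Tri := by
  intro n
  induction n with
  | zero =>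
    intro p hp
    rcases hp with h | h | h <;> subst h
    exacts [u1_mem_Tri, u2_mem_Tri, u3_mem_Tri]
  | succ n ih =>
    rw [V_succ]
    rintro x ((⟨p, hp, rfl⟩ | ⟨p, hp, rfl⟩) | ⟨p, hp, rfl⟩) <;>
      obtain ⟨h1, h2, h3⟩ := ih hp
    · rw [phi1_eq]; exact ⟨by linarith, by linarith, by nlinarith [s3_pos]⟩
    · rw [phi2_eq]
      refine ⟨by positivity, by nlinarith [s3_pos], by nlinarith [s3_pos]⟩
    · rw [phi3_eq]
      refine ⟨by linarith, by nlinarith [s3_pos], by nlinarith [s3_pos]⟩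

lemma u1_ne_u2 : u1 ≠ u2 := by
  intro h; rw [Prod.ext_iff] at h; norm_num [u1, u2] at h
lemma u1_ne_u3 : u1 ≠ u3 := by
  intro h; rw [Prod.ext_iff] at h; norm_num [u1, u3] at h
lemma u2_ne_u3 : u2 ≠ u3 := by
  intro h; rw [Prod.ext_iff] at h; norm_num [u2, u3] at h
lemma corners_mem_V : ∀ n, u1 ∈ V n ∧ u2 ∈ V n ∧ u3 ∈ V n := by
  intro n
  induction n with
  | zero => exact ⟨Or.inl rfl, Or.inr (Or.inl rfl), Or.inr (Or.inr rfl)⟩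
  | succ n ih =>
    rw [V_succ]
    refine ⟨Or.inl (Or.inl ⟨u1, ih.1, ?_⟩), Or.inl (Or.inr ⟨u2, ih.2.1, ?_⟩),
      Or.inr ⟨u3, ih.2.2, ?_⟩⟩
    all_goals norm_num [phi1_eq, phi2_eq, phi3_eq, u1, u2, u3, Prod.ext_iff]

lemma Ed_sub_V : ∀ n, ∀ q ∈ Ed n, q.1 ∈ V n ∧ q.2 ∈ V n := by
  intro n
  induction n with
  | zero =>
    rintro q (h | h | h) <;> subst h <;>
      exact ⟨by simp [V], by simp [V]⟩
  | succ n ih =>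
    rw [Ed_succ, V_succ]
    rintro q ((⟨e, he, rfl⟩ | ⟨e, he, rfl⟩) | ⟨e, he, rfl⟩)
    · exact ⟨Or.inl (Or.inl ⟨e.1, (ih e he).1, rfl⟩), Or.inl (Or.inl ⟨e.2, (ih e he).2, rfl⟩)⟩
    · exact ⟨Or.inl (Or.inr ⟨e.1, (ih e he).1, rfl⟩), Or.inl (Or.inr ⟨e.2, (ih e he).2, rfl⟩)⟩
    · exact ⟨Or.inr ⟨e.1, (ih e he).1, rfl⟩, Or.inr ⟨e.2, (ih e he).2, rfl⟩⟩

lemma V_finite : ∀ n, (V n).Finite := by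
  intro n
  induction n with
  | zero => exact (Set.finite_singleton _).insert _ |>.insert _
  | succ n ih =>
    rw [V_succ]
    exact ((ih.image _).union (ih.image _)).union (ih.image _)

lemma adj_mem_V {n : ℕ} {x y : Pt} (h : (SG n).Adj x y) : x ∈ V n ∧ y ∈ V n := by
  rcases h.1 with h' | h'
  · exact Ed_sub_V n _ h'
  · exact ⟨(Ed_sub_V n _ h').2, (Ed_sub_V n _ h').1⟩

end SGaux
namespace SGaux

def psi1 (x : Pt) : Pt := (2:ℝ) • x
def psi2 (x : Pt) : Pt := (2:ℝ) • x - u2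
def psi3 (x : Pt) : Pt := (2:ℝ) • x - u3

lemma psi1_eq (x : Pt) : psi1 x = (2 * x.1, 2 * x.2) := rfl
lemma psi2_eq (x : Pt) : psi2 x = (2 * x.1 - 1/2, 2 * x.2 - Real.sqrt 3 / 2) := rfl
lemma psi3_eq (x : Pt) : psi3 x = (2 * x.1 - 1, 2 * x.2) := by
  simp [psi3, u3, Prod.ext_iff, smul_eq_mul]

lemma phi1_psi1 (x : Pt) : phi1 (psi1 x) = x := by
  rw [phi1_eq, psi1_eq, Prod.ext_iff]; constructor <;> [skip; skip] <;> dsimp <;> ring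
lemma phi2_psi2 (x : Pt) : phi2 (psi2 x) = x := by
  rw [phi2_eq, psi2_eq, Prod.ext_iff]; constructor <;> dsimp <;> ring
lemma phi3_psi3 (x : Pt) : phi3 (psi3 x) = x := by
  rw [phi3_eq, psi3_eq, Prod.ext_iff]; constructor <;> dsimp <;> ring

lemma phi1_eq_iff {p x : Pt} : phi1 p = x ↔ p = psi1 x :=
  ⟨fun h => phi1_inj (by rw [h, phi1_psi1]), fun h => by rw [h, phi1_psi1]⟩
lemma phi2_eq_iff {p x : Pt} : phi2 p = x ↔ p = psi2 x :=
  ⟨fun h => phi2_inj (by rw [h, phi2_psi2]), fun h => by rw [h, phi2_psi2]⟩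
lemma phi3_eq_iff {p x : Pt} : phi3 p = x ↔ p = psi3 x :=
  ⟨fun h => phi3_inj (by rw [h, phi3_psi3]), fun h => by rw [h, phi3_psi3]⟩

lemma adj_succ {n : ℕ} {x y : Pt} : (SG (n+1)).Adj x y ↔
    (∃ p q, (SG n).Adj p q ∧ x = phi1 p ∧ y = phi1 q) ∨
    (∃ p q, (SG n).Adj p q ∧ x = phi2 p ∧ y = phi2 q) ∨
    (∃ p q, (SG n).Adj p q ∧ x = phi3 p ∧ y = phi3 q) := by
  constructor
  · rintro ⟨hm, hne⟩
    have mk : ∀ (φ : Pt → Pt) (a b : Pt), ((a, b) ∈ Ed n ∨ (b, a) ∈ Ed n) → φ a = x →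
        φ b = y → ∃ p q, (SG n).Adj p q ∧ x = φ p ∧ y = φ q := by
      intro φ a b hab ha hb
      refine ⟨a, b, ⟨hab, ?_⟩, ha.symm, hb.symm⟩
      rintro rfl; exact hne (ha ▸ hb ▸ rfl)
    rw [Ed_succ] at hm
    rcases hm with (((⟨e, he, hx⟩ | ⟨e, he, hx⟩) | ⟨e, he, hx⟩) |
      ((⟨e, he, hx⟩ | ⟨e, he, hx⟩) | ⟨e, he, hx⟩)) <;>
      rw [Prod.ext_iff] at hx <;> obtain ⟨h1, h2⟩ := hx
    · exact Or.inl (mk phi1 e.1 e.2 (Or.inl (by rwa [Prod.mk.eta])) h1 h2)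
    · exact Or.inr (Or.inl (mk phi2 e.1 e.2 (Or.inl (by rwa [Prod.mk.eta])) h1 h2))
    · exact Or.inr (Or.inr (mk phi3 e.1 e.2 (Or.inl (by rwa [Prod.mk.eta])) h1 h2))
    · exact Or.inl (mk phi1 e.2 e.1 (Or.inr (by rwa [Prod.mk.eta])) h2 h1)
    · exact Or.inr (Or.inl (mk phi2 e.2 e.1 (Or.inr (by rwa [Prod.mk.eta])) h2 h1))
    · exact Or.inr (Or.inr (mk phi3 e.2 e.1 (Or.inr (by rwa [Prod.mk.eta])) h2 h1))
  · have mk : ∀ (φ : Pt → Pt), Function.Injective φ →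
        ((fun q : Pt × Pt => (φ q.1, φ q.2)) '' Ed n ⊆ Ed (n+1)) →
        ∀ p q, (SG n).Adj p q → (SG (n+1)).Adj (φ p) (φ q) := by
      intro φ hinj hsub p q ⟨hm, hne⟩
      refine ⟨?_, fun h => hne (hinj h)⟩
      rcases hm with h | h
      · exact Or.inl (hsub ⟨(p, q), h, rfl⟩)
      · exact Or.inr (hsub ⟨(q, p), h, rfl⟩)
    have s1 : (fun q : Pt × Pt => (phi1 q.1, phi1 q.2)) '' Ed n ⊆ Ed (n+1) := by
      rw [Ed_succ]; exact fun e he => Or.inl (Or.inl he)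
    have s2 : (fun q : Pt × Pt => (phi2 q.1, phi2 q.2)) '' Ed n ⊆ Ed (n+1) := by
      rw [Ed_succ]; exact fun e he => Or.inl (Or.inr he)
    have s3 : (fun q : Pt × Pt => (phi3 q.1, phi3 q.2)) '' Ed n ⊆ Ed (n+1) := by
      rw [Ed_succ]; exact fun e he => Or.inr he
    rintro (⟨p, q, h, rfl, rfl⟩ | ⟨p, q, h, rfl, rfl⟩ | ⟨p, q, h, rfl, rfl⟩)
    · exact mk phi1 phi1_inj s1 p q h
    · exact mk phi2 phi2_inj s2 p q h
    · exact mk phi3 phi3_inj s3 p q h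

lemma adj_phi1 {n : ℕ} {p q : Pt} (h : (SG n).Adj p q) : (SG (n+1)).Adj (phi1 p) (phi1 q) :=
  adj_succ.2 (Or.inl ⟨p, q, h, rfl, rfl⟩)
lemma adj_phi2 {n : ℕ} {p q : Pt} (h : (SG n).Adj p q) : (SG (n+1)).Adj (phi2 p) (phi2 q) :=
  adj_succ.2 (Or.inr (Or.inl ⟨p, q, h, rfl, rfl⟩))
lemma adj_phi3 {n : ℕ} {p q : Pt} (h : (SG n).Adj p q) : (SG (n+1)).Adj (phi3 p) (phi3 q) :=
  adj_succ.2 (Or.inr (Or.inr ⟨p, q, h, rfl, rfl⟩))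

/-- Neighbour set. -/
def Nb (n : ℕ) (x : Pt) : Set Pt := {y | (SG n).Adj x y}

lemma Nb_sub_V {n : ℕ} {x : Pt} : Nb n x ⊆ V n := fun _ hy => (adj_mem_V hy).2
lemma Nb_finite (n : ℕ) (x : Pt) : (Nb n x).Finite := (V_finite n).subset Nb_sub_V
lemma Nb_empty_of_not_mem {n : ℕ} {x : Pt} (h : x ∉ V n) : Nb n x = ∅ :=
  Set.eq_empty_of_forall_notMem fun _ hy => h (adj_mem_V hy).1
lemma Nb_ncard_zero_of_not_Tri {n : ℕ} {x : Pt} (h : x ∉ Tri) : (Nb n x).ncard = 0 := by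
  rw [Nb_empty_of_not_mem (fun hx => h (V_subset_Tri n hx))]; simp

lemma Nb_succ (n : ℕ) (x : Pt) : Nb (n+1) x =
    phi1 '' Nb n (psi1 x) ∪ phi2 '' Nb n (psi2 x) ∪ phi3 '' Nb n (psi3 x) := by
  ext y
  simp only [Nb, Set.mem_setOf_eq, adj_succ, Set.mem_union, Set.mem_image]
  constructor
  · rintro (⟨p, q, h, hx, rfl⟩ | ⟨p, q, h, hx, rfl⟩ | ⟨p, q, h, hx, rfl⟩)
    · exact Or.inl (Or.inl ⟨q, by rwa [← phi1_eq_iff.1 hx.symm], rfl⟩)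
    · exact Or.inl (Or.inr ⟨q, by rwa [← phi2_eq_iff.1 hx.symm], rfl⟩)
    · exact Or.inr ⟨q, by rwa [← phi3_eq_iff.1 hx.symm], rfl⟩
  · rintro ((⟨q, hq, rfl⟩ | ⟨q, hq, rfl⟩) | ⟨q, hq, rfl⟩)
    · exact Or.inl ⟨psi1 x, q, hq, (phi1_psi1 x).symm, rfl⟩
    · exact Or.inr (Or.inl ⟨psi2 x, q, hq, (phi2_psi2 x).symm, rfl⟩)
    · exact Or.inr (Or.inr ⟨psi3 x, q, hq, (phi3_psi3 x).symm, rfl⟩)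

lemma ncard_Nb_succ_le (n : ℕ) (x : Pt) : (Nb (n+1) x).ncard ≤
    (Nb n (psi1 x)).ncard + (Nb n (psi2 x)).ncard + (Nb n (psi3 x)).ncard := by
  rw [Nb_succ]
  calc (phi1 '' Nb n (psi1 x) ∪ phi2 '' Nb n (psi2 x) ∪ phi3 '' Nb n (psi3 x)).ncard
      ≤ (phi1 '' Nb n (psi1 x) ∪ phi2 '' Nb n (psi2 x)).ncard + (phi3 '' Nb n (psi3 x)).ncard :=
        Set.ncard_union_le _ _
    _ ≤ (phi1 '' Nb n (psi1 x)).ncard + (phi2 '' Nb n (psi2 x)).ncard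
          + (phi3 '' Nb n (psi3 x)).ncard := by
        have := Set.ncard_union_le (phi1 '' Nb n (psi1 x)) (phi2 '' Nb n (psi2 x)); omega
    _ = (Nb n (psi1 x)).ncard + (Nb n (psi2 x)).ncard + (Nb n (psi3 x)).ncard := by
        rw [Set.ncard_image_of_injective _ phi1_inj, Set.ncard_image_of_injective _ phi2_inj,
          Set.ncard_image_of_injective _ phi3_inj]

end SGaux
namespace SGaux

lemma sep12 {p q : Pt} (hp : p ∈ Tri) (hq : q ∈ Tri) (h : phi1 p = phi2 q) :
    p = u2 ∧ q = u1 := by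
  rw [phi1_eq, phi2_eq, Prod.ext_iff] at h
  obtain ⟨h1, h2⟩ := h; dsimp at h1 h2
  obtain ⟨hp0, hp1, hp2⟩ := hp; obtain ⟨hq0, hq1, hq2⟩ := hq
  have e1 : p.1 = 1/2 + q.1 := by linarith
  have e2 : p.2 = Real.sqrt 3 / 2 + q.2 := by linarith
  have hs := s3_pos
  have hq1' : q.1 ≤ 0 := by nlinarith
  have hq1'' : 0 ≤ q.1 := by nlinarith
  have hqq1 : q.1 = 0 := le_antisymm hq1' hq1''
  have hqq2 : q.2 = 0 := le_antisymm (by nlinarith) hq0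
  constructor
  · rw [Prod.ext_iff, u2]; constructor <;> dsimp <;> [linarith; linarith]
  · rw [Prod.ext_iff, u1]; exact ⟨hqq1, hqq2⟩

lemma sep13 {p q : Pt} (hp : p ∈ Tri) (hq : q ∈ Tri) (h : phi1 p = phi3 q) :
    p = u3 ∧ q = u1 := by
  rw [phi1_eq, phi3_eq, Prod.ext_iff] at h
  obtain ⟨h1, h2⟩ := h; dsimp at h1 h2
  obtain ⟨hp0, hp1, hp2⟩ := hp; obtain ⟨hq0, hq1, hq2⟩ := hq
  have e1 : p.1 = 1 + q.1 := by linarith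
  have e2 : p.2 = q.2 := by linarith
  have hs := s3_pos
  have hq1' : q.1 ≤ 0 := by nlinarith
  have hq1'' : 0 ≤ q.1 := by nlinarith
  have hqq2 : q.2 = 0 := le_antisymm (by nlinarith) hq0
  constructor
  · rw [Prod.ext_iff, u3]; constructor <;> dsimp <;> [linarith; linarith]
  · rw [Prod.ext_iff, u1]; exact ⟨le_antisymm hq1' hq1'', hqq2⟩

lemma sep23 {p q : Pt} (hp : p ∈ Tri) (hq : q ∈ Tri) (h : phi2 p = phi3 q) :
    p = u3 ∧ q = u2 := by
  rw [phi2_eq, phi3_eq, Prod.ext_iff] at h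
  obtain ⟨h1, h2⟩ := h; dsimp at h1 h2
  obtain ⟨hp0, hp1, hp2⟩ := hp; obtain ⟨hq0, hq1, hq2⟩ := hq
  have e1 : q.1 = p.1 - 1/2 := by linarith
  have e2 : q.2 = p.2 + Real.sqrt 3 / 2 := by linarith
  have hs := s3_pos
  have h3 := s3_sq
  -- q.2 ≥ √3/2 ; q.2 ≤ √3 q.1 and q.2 ≤ √3(1-q.1) give q.2 ≤ √3/2
  have hq2' : q.2 = Real.sqrt 3 / 2 := by
    refine le_antisymm ?_ (by linarith)
    nlinarith
  have hq1' : q.1 = 1/2 := by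
    have a1 : Real.sqrt 3 / 2 ≤ Real.sqrt 3 * q.1 := hq2' ▸ hq1
    have a2 : Real.sqrt 3 / 2 ≤ Real.sqrt 3 * (1 - q.1) := hq2' ▸ hq2
    have b1 : 1/2 ≤ q.1 := by nlinarith
    have b2 : q.1 ≤ 1/2 := by nlinarith
    linarith
  constructor
  · rw [Prod.ext_iff, u3]; constructor <;> dsimp <;> [linarith; linarith]
  · rw [Prod.ext_iff, u2]; exact ⟨hq1', hq2'⟩

lemma psi1_u1 : psi1 u1 = u1 := by
  rw [psi1_eq, u1, Prod.mk.injEq]; exact ⟨by ring, by ring⟩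
lemma psi2_u2 : psi2 u2 = u2 := by
  rw [psi2_eq, u2, Prod.mk.injEq]; exact ⟨by ring, by ring⟩
lemma psi3_u3 : psi3 u3 = u3 := by
  rw [psi3_eq, u3, Prod.mk.injEq]; exact ⟨by ring, by ring⟩

lemma psi2_u1_not : psi2 u1 ∉ Tri := by
  rw [psi2_eq, u1]; intro h; obtain ⟨h0, -, -⟩ := h; dsimp at h0; nlinarith [s3_pos]
lemma psi3_u1_not : psi3 u1 ∉ Tri := by
  rw [psi3_eq, u1]; intro h; obtain ⟨-, h1, -⟩ := h; dsimp at h1; nlinarith [s3_pos]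
lemma psi1_u2_not : psi1 u2 ∉ Tri := by
  rw [psi1_eq, u2]; intro h; obtain ⟨-, -, h2⟩ := h; dsimp at h2; nlinarith [s3_pos]
lemma psi3_u2_not : psi3 u2 ∉ Tri := by
  rw [psi3_eq, u2]; intro h; obtain ⟨-, h1, -⟩ := h; dsimp at h1; nlinarith [s3_pos]
lemma psi1_u3_not : psi1 u3 ∉ Tri := by
  rw [psi1_eq, u3]; intro h; obtain ⟨-, -, h2⟩ := h; dsimp at h2; nlinarith [s3_pos]
lemma psi2_u3_not : psi2 u3 ∉ Tri := by
  rw [psi2_eq, u3]; intro h; obtain ⟨h0, -, -⟩ := h; dsimp at h0; nlinarith [s3_pos]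

lemma V0_eq : V 0 = ({u1, u2, u3} : Set Pt) := rfl

lemma Nb0_le_two (x : Pt) : (Nb 0 x).ncard ≤ 2 := by
  have hsub : Nb 0 x ⊆ V 0 \ {x} := fun y hy => ⟨Nb_sub_V hy, fun h => hy.2 (by
    rw [Set.mem_singleton_iff] at h; exact h.symm)⟩
  by_cases hx : x ∈ V 0
  · rcases hx with rfl | rfl | rfl
    · have : Nb 0 u1 ⊆ ({u2, u3} : Set Pt) := by
        intro y hy; rcases hsub hy with ⟨h | h | h, hne⟩
        · exact absurd h (by simpa using hne)
        · exact Or.inl h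
        · exact Or.inr h
      calc (Nb 0 u1).ncard ≤ ({u2, u3} : Set Pt).ncard :=
            Set.ncard_le_ncard this ((Set.finite_singleton _).insert _)
        _ ≤ 2 := le_trans (Set.ncard_insert_le _ _) (by simp)
    · have : Nb 0 u2 ⊆ ({u1, u3} : Set Pt) := by
        intro y hy; rcases hsub hy with ⟨h | h | h, hne⟩
        · exact Or.inl h
        · exact absurd h (by simpa using hne)
        · exact Or.inr h
      calc (Nb 0 u2).ncard ≤ ({u1, u3} : Set Pt).ncard :=
            Set.ncard_le_ncard this ((Set.finite_singleton _).insert _)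
        _ ≤ 2 := le_trans (Set.ncard_insert_le _ _) (by simp)
    · have : Nb 0 u3 ⊆ ({u1, u2} : Set Pt) := by
        intro y hy; rcases hsub hy with ⟨h | h | h, hne⟩
        · exact Or.inl h
        · exact Or.inr h
        · exact absurd h (by simpa using hne)
      calc (Nb 0 u3).ncard ≤ ({u1, u2} : Set Pt).ncard :=
            Set.ncard_le_ncard this ((Set.finite_singleton _).insert _)
        _ ≤ 2 := le_trans (Set.ncard_insert_le _ _) (by simp)
  · rw [Nb_empty_of_not_mem hx]; simp

lemma deg_corner : ∀ n, (Nb n u1).ncard ≤ 2 ∧ (Nb n u2).ncard ≤ 2 ∧ (Nb n u3).ncard ≤ 2 := by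
  intro n
  induction n with
  | zero => exact ⟨Nb0_le_two u1, Nb0_le_two u2, Nb0_le_two u3⟩
  | succ n ih =>
    refine ⟨?_, ?_, ?_⟩
    · have h := ncard_Nb_succ_le n u1
      rw [psi1_u1, Nb_ncard_zero_of_not_Tri psi2_u1_not,
        Nb_ncard_zero_of_not_Tri psi3_u1_not] at h
      have := ih.1; omega
    · have h := ncard_Nb_succ_le n u2
      rw [psi2_u2, Nb_ncard_zero_of_not_Tri psi1_u2_not,
        Nb_ncard_zero_of_not_Tri psi3_u2_not] at h
      have := ih.2.1; omega
    · have h := ncard_Nb_succ_le n u3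
      rw [psi3_u3, Nb_ncard_zero_of_not_Tri psi1_u3_not,
        Nb_ncard_zero_of_not_Tri psi2_u3_not] at h
      have := ih.2.2; omega

end SGaux
namespace SGaux

lemma deg_le : ∀ n (x : Pt), (Nb n x).ncard ≤ 4 := by
  intro n
  induction n with
  | zero => intro x; have := Nb0_le_two x; omega
  | succ n ih =>
    intro x
    have h := ncard_Nb_succ_le n x
    have hc : ∀ y : Pt, y = u1 ∨ y = u2 ∨ y = u3 → (Nb n y).ncard ≤ 2 := by
      rintro y (rfl | rfl | rfl)
      exacts [(deg_corner n).1, (deg_corner n).2.1, (deg_corner n).2.2]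
    by_cases h1 : psi1 x ∈ V n <;> by_cases h2 : psi2 x ∈ V n <;>
      by_cases h3 : psi3 x ∈ V n
    · -- all three: contradiction
      obtain ⟨ha, -⟩ := sep12 (V_subset_Tri n h1) (V_subset_Tri n h2)
        (by rw [phi1_psi1, phi2_psi2])
      obtain ⟨hb, -⟩ := sep13 (V_subset_Tri n h1) (V_subset_Tri n h3)
        (by rw [phi1_psi1, phi3_psi3])
      exact absurd (ha ▸ hb : u2 = u3) u2_ne_u3
    · obtain ⟨ha, hb⟩ := sep12 (V_subset_Tri n h1) (V_subset_Tri n h2)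
        (by rw [phi1_psi1, phi2_psi2])
      have b1 := hc _ (Or.inr (Or.inl ha))
      have b2 := hc _ (Or.inl hb)
      rw [Nb_empty_of_not_mem h3] at h; simp at h; omega
    · obtain ⟨ha, hb⟩ := sep13 (V_subset_Tri n h1) (V_subset_Tri n h3)
        (by rw [phi1_psi1, phi3_psi3])
      have b1 := hc _ (Or.inr (Or.inr ha))
      have b2 := hc _ (Or.inl hb)
      rw [Nb_empty_of_not_mem h2] at h; simp at h; omega
    · have b1 := ih (psi1 x)
      rw [Nb_empty_of_not_mem h2, Nb_empty_of_not_mem h3] at h; simp at h; omega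
    · obtain ⟨ha, hb⟩ := sep23 (V_subset_Tri n h2) (V_subset_Tri n h3)
        (by rw [phi2_psi2, phi3_psi3])
      have b1 := hc _ (Or.inr (Or.inr ha))
      have b2 := hc _ (Or.inr (Or.inl hb))
      rw [Nb_empty_of_not_mem h1] at h; simp at h; omega
    · have b1 := ih (psi2 x)
      rw [Nb_empty_of_not_mem h1, Nb_empty_of_not_mem h3] at h; simp at h; omega
    · have b1 := ih (psi3 x)
      rw [Nb_empty_of_not_mem h1, Nb_empty_of_not_mem h2] at h; simp at h; omega
    · rw [Nb_empty_of_not_mem h1, Nb_empty_of_not_mem h2, Nb_empty_of_not_mem h3] at h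
      simp at h; omega

lemma phi1_u1 : phi1 u1 = u1 := by
  rw [phi1_eq, u1, Prod.mk.injEq]; exact ⟨by ring, by ring⟩
lemma phi2_u2 : phi2 u2 = u2 := by
  rw [phi2_eq, u2, Prod.mk.injEq]; exact ⟨by ring, by ring⟩
lemma phi3_u3 : phi3 u3 = u3 := by
  rw [phi3_eq, u3, Prod.mk.injEq]; exact ⟨by ring, by ring⟩
lemma m12 : phi1 u2 = phi2 u1 := by
  rw [phi1_eq, phi2_eq, u1, u2, Prod.mk.injEq]; exact ⟨by ring, by ring⟩
lemma m13 : phi1 u3 = phi3 u1 := by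
  rw [phi1_eq, phi3_eq, u1, u3, Prod.mk.injEq]; exact ⟨by ring, by ring⟩
lemma m23 : phi2 u3 = phi3 u2 := by
  rw [phi2_eq, phi3_eq, u2, u3, Prod.mk.injEq]; exact ⟨by ring, by ring⟩

lemma adj0_12 : (SG 0).Adj u1 u2 := ⟨Or.inl (Or.inl rfl), u1_ne_u2⟩
lemma adj0_23 : (SG 0).Adj u2 u3 := ⟨Or.inl (Or.inr (Or.inl rfl)), u2_ne_u3⟩
lemma adj0_13 : (SG 0).Adj u1 u3 := ⟨Or.inl (Or.inr (Or.inr rfl)), u1_ne_u3⟩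

lemma conn : ∀ n, ∀ x ∈ V n, Relation.ReflTransGen (SG n).Adj x u1 ∧
    Relation.ReflTransGen (SG n).Adj x u2 ∧ Relation.ReflTransGen (SG n).Adj x u3 := by
  intro n
  induction n with
  | zero =>
    rintro x (rfl | rfl | rfl)
    · exact ⟨.refl, .single adj0_12, .single adj0_13⟩
    · exact ⟨.single adj0_12.symm, .refl, .single adj0_23⟩
    · exact ⟨.single adj0_13.symm, .single adj0_23.symm, .refl⟩
  | succ n ih =>
    have L1 : ∀ a b : Pt, Relation.ReflTransGen (SG n).Adj a b →
        Relation.ReflTransGen (SG (n+1)).Adj (phi1 a) (phi1 b) :=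
      fun a b h => Relation.ReflTransGen.lift phi1 (fun _ _ h => adj_phi1 h) a b h
    have L2 : ∀ a b : Pt, Relation.ReflTransGen (SG n).Adj a b →
        Relation.ReflTransGen (SG (n+1)).Adj (phi2 a) (phi2 b) :=
      fun a b h => Relation.ReflTransGen.lift phi2 (fun _ _ h => adj_phi2 h) a b h
    have L3 : ∀ a b : Pt, Relation.ReflTransGen (SG n).Adj a b →
        Relation.ReflTransGen (SG (n+1)).Adj (phi3 a) (phi3 b) :=
      fun a b h => Relation.ReflTransGen.lift phi3 (fun _ _ h => adj_phi3 h) a b h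
    rw [V_succ]
    rintro x ((⟨p, hp, rfl⟩ | ⟨p, hp, rfl⟩) | ⟨p, hp, rfl⟩)
    · obtain ⟨c1, c2, c3⟩ := ih p hp
      refine ⟨phi1_u1 ▸ L1 _ _ c1, ?_, ?_⟩
      · have t := L2 u1 u2 (ih u1 (corners_mem_V n).1).2.1
        rw [phi2_u2, ← m12] at t
        exact .trans (L1 _ _ c2) t
      · have t := L3 u1 u3 (ih u1 (corners_mem_V n).1).2.2
        rw [phi3_u3, ← m13] at t
        exact .trans (L1 _ _ c3) t
    · obtain ⟨c1, c2, c3⟩ := ih p hp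
      refine ⟨?_, phi2_u2 ▸ L2 _ _ c2, ?_⟩
      · have t := L1 u2 u1 (ih u2 (corners_mem_V n).2.1).1
        rw [phi1_u1, m12] at t
        exact .trans (L2 _ _ c1) t
      · have t := L3 u2 u3 (ih u2 (corners_mem_V n).2.1).2.2
        rw [phi3_u3, ← m23] at t
        exact .trans (L2 _ _ c3) t
    · obtain ⟨c1, c2, c3⟩ := ih p hp
      refine ⟨?_, ?_, phi3_u3 ▸ L3 _ _ c3⟩
      · have t := L1 u3 u1 (ih u3 (corners_mem_V n).2.2).1
        rw [phi1_u1, m13] at t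
        exact .trans (L3 _ _ c1) t
      · have t := L2 u3 u2 (ih u3 (corners_mem_V n).2.2).2.1
        rw [phi2_u2, m23] at t
        exact .trans (L3 _ _ c2) t

end SGaux
namespace SGaux

lemma lap_eq (n : ℕ) (f : Pt → ℝ) (x : Pt) :
    lap n f x = 4 * f x - ∑ y ∈ (Nb_finite n x).toFinset, f y := by
  unfold lap; congr 1
  exact finsum_mem_eq_finite_toFinset_sum f (Nb_finite n x)

lemma u1_mem_corners : u1 ∈ corners := Or.inl rfl
lemma mem_V_zero_corners {x : Pt} (h : x ∈ V 0) : x ∈ corners := h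

lemma card_NF_le (n : ℕ) (x : Pt) : ((Nb_finite n x).toFinset).card ≤ 4 := by
  have h := deg_le n x
  rwa [Set.ncard_eq_toFinset_card _ (Nb_finite n x)] at h

/-- Minimum principle: the Green function is nonnegative on `V n`. -/
lemma green_nonneg (n : ℕ) (g : ℕ → Pt → Pt → ℝ) (hg : ∀ n, IsGreen n (g n))
    {z : Pt} (hz : z ∈ V n) (hznc : z ∉ corners) : ∀ x ∈ V n, 0 ≤ g n x z := by
  by_contra hcon
  push_neg at hcon
  obtain ⟨xb, hxbV, hxb⟩ := hcon
  obtain ⟨x0, hx0mem, hmin⟩ := Finset.exists_min_image ((V_finite n).toFinset)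
    (fun w => g n w z) ⟨xb, (V_finite n).mem_toFinset.2 hxbV⟩
  have hx0V : x0 ∈ V n := (V_finite n).mem_toFinset.1 hx0mem
  have hmin' : ∀ w ∈ V n, g n x0 z ≤ g n w z := fun w hw =>
    hmin w ((V_finite n).mem_toFinset.2 hw)
  have hm_neg : g n x0 z < 0 := lt_of_le_of_lt (hmin' xb hxbV) hxb
  -- propagate the minimum along any path
  have key : ∀ b : Pt, Relation.ReflTransGen (SG n).Adj x0 b → g n b z = g n x0 z := by
    intro b h
    induction h with
    | refl => rfl
    | @tail b c _hab hbc ih =>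
      have hbV : b ∈ V n := (adj_mem_V hbc).1
      have hbnc : b ∉ corners := by
        intro hc
        have := (hg n).1 b z (Or.inl hc)
        rw [this] at ih; rw [← ih] at hm_neg; exact absurd hm_neg (by norm_num)
      have hlap := (hg n).2 z hz hznc b hbV hbnc
      rw [lap_eq] at hlap
      set NF := (Nb_finite n b).toFinset with hNF
      have hdelta : (0:ℝ) ≤ (if b = z then 1 else 0) := by split <;> norm_num
      have hsum_le : ∑ w ∈ NF, g n w z ≤ 4 * g n x0 z := by
        rw [ih] at hlap; linarith [hlap ▸ hdelta, hlap]
      have hterm : ∀ w ∈ NF, (0:ℝ) ≤ g n w z - g n x0 z := by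
        intro w hw
        have hwV : w ∈ V n := Nb_sub_V ((Nb_finite n b).mem_toFinset.1 hw)
        linarith [hmin' w hwV]
      have hcard : (NF.card : ℝ) ≤ 4 := by exact_mod_cast card_NF_le n b
      have hsum0 : ∑ w ∈ NF, (g n w z - g n x0 z) = 0 := by
        have h1 : (0:ℝ) ≤ ∑ w ∈ NF, (g n w z - g n x0 z) := Finset.sum_nonneg hterm
        have h2 : ∑ w ∈ NF, (g n w z - g n x0 z)
            = (∑ w ∈ NF, g n w z) - NF.card * g n x0 z := by
          rw [Finset.sum_sub_distrib, Finset.sum_const, nsmul_eq_mul]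
        have h3 : (∑ w ∈ NF, g n w z) - NF.card * g n x0 z
            ≤ 4 * g n x0 z - NF.card * g n x0 z := by linarith
        have h4 : 4 * g n x0 z - (NF.card : ℝ) * g n x0 z ≤ 0 := by nlinarith
        linarith [h2 ▸ le_trans h3 h4, h1]
      have hc : c ∈ NF := (Nb_finite n b).mem_toFinset.2 hbc
      have := (Finset.sum_eq_zero_iff_of_nonneg hterm).1 hsum0 c hc
      linarith [this]
  have hchain := (conn n x0 hx0V).1
  have h0 : g n u1 z = 0 := (hg n).1 u1 z (Or.inl u1_mem_corners)
  rw [key u1 hchain] at h0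
  rw [h0] at hm_neg; exact absurd hm_neg (by norm_num)

end SGaux
namespace SGaux

lemma green_diff_le (n : ℕ) (g : ℕ → Pt → Pt → ℝ) (hg : ∀ n, IsGreen n (g n))
    {x y z : Pt} (hx : x ∈ V n) (hy : y ∈ V n) (hz : z ∈ V n)
    (hadj : (SG n).Adj x y) : g n x z - g n y z ≤ 1 := by
  by_cases hzc : z ∈ corners
  · rw [(hg n).1 x z (Or.inr hzc), (hg n).1 y z (Or.inr hzc)]; norm_num
  by_cases hle : g n x z ≤ g n y z
  · linarith
  push_neg at hle
  have hnn := green_nonneg n g hg hz hzc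
  set u : Pt → ℝ := fun w => g n w z with hu
  have hy0 : 0 ≤ u y := hnn y hy
  have hle' : u y < u x := hle
  set t : ℝ := (u y + u x) / 2 with hT
  have ht1 : u y < t := by rw [hT]; linarith
  have ht2 : t < u x := by rw [hT]; linarith
  have ht0 : 0 < t := by rw [hT]; linarith
  set A : Finset Pt := ((V_finite n).toFinset).filter (fun a => t < u a) with hA
  have hmemA : ∀ a : Pt, a ∈ A ↔ (a ∈ V n ∧ t < u a) := by
    intro a
    rw [hA, Finset.mem_filter, (V_finite n).mem_toFinset]
  have hAnc : ∀ a ∈ A, a ∉ corners := by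
    intro a ha hc
    have h0 : u a = 0 := (hg n).1 a z (Or.inl hc)
    have := ((hmemA a).1 ha).2
    rw [h0] at this; linarith
  have hlapA : ∀ a ∈ A, lap n u a = if a = z then 1 else 0 := fun a ha =>
    (hg n).2 z hz hzc a ((hmemA a).1 ha).1 (hAnc a ha)
  have htot : ∑ a ∈ A, lap n u a ≤ 1 := by
    rw [Finset.sum_congr rfl hlapA, Finset.sum_ite_eq' A z (fun _ => (1:ℝ))]
    split <;> norm_num
  -- expansion of the Laplacian
  have hexp : ∀ a ∈ A, lap n u a =
      (4 - (((Nb_finite n a).toFinset).card : ℝ)) * u a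
        + ∑ w ∈ (Nb_finite n a).toFinset, (u a - u w) := by
    intro a _
    rw [lap_eq, Finset.sum_sub_distrib, Finset.sum_const, nsmul_eq_mul]
    ring
  have hsplit : ∀ a ∈ A, ∑ w ∈ (Nb_finite n a).toFinset, (u a - u w) =
      (∑ w ∈ ((Nb_finite n a).toFinset).filter (fun w => w ∈ A), (u a - u w))
        + ∑ w ∈ ((Nb_finite n a).toFinset).filter (fun w => w ∉ A), (u a - u w) := by
    intro a _
    exact (Finset.sum_filter_add_sum_filter_not _ _ _).symm
  -- the "interior" part cancels by antisymmetry
  have hfilt : ∀ a : Pt, ((Nb_finite n a).toFinset).filter (fun w => w ∈ A)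
      = A.filter (fun w => (SG n).Adj a w) := by
    intro a
    ext w
    simp only [Finset.mem_filter, (Nb_finite n a).mem_toFinset]
    constructor
    · rintro ⟨hw, hwa⟩; exact ⟨hwa, hw⟩
    · rintro ⟨hwa, hw⟩; exact ⟨hw, hwa⟩
  have hSin : ∑ a ∈ A, ∑ w ∈ ((Nb_finite n a).toFinset).filter (fun w => w ∈ A),
      (u a - u w) = 0 := by
    have hrw : ∀ a ∈ A, ∑ w ∈ ((Nb_finite n a).toFinset).filter (fun w => w ∈ A),
        (u a - u w) = ∑ w ∈ A, if (SG n).Adj a w then u a - u w else 0 := by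
      intro a _
      rw [hfilt a, Finset.sum_filter]
    rw [Finset.sum_congr rfl hrw]
    set S := ∑ a ∈ A, ∑ w ∈ A, if (SG n).Adj a w then u a - u w else 0 with hS
    have hanti : ∀ a w : Pt, (if (SG n).Adj a w then u a - u w else 0)
        = -(if (SG n).Adj w a then u w - u a else 0) := by
      intro a w
      by_cases h : (SG n).Adj a w
      · rw [if_pos h, if_pos h.symm]; ring
      · rw [if_neg h, if_neg (fun h' => h h'.symm)]; ring
    have : S = -S := by
      conv_lhs => rw [hS, Finset.sum_comm]
      conv_rhs => rw [hS]
      rw [← Finset.sum_neg_distrib]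
      refine Finset.sum_congr rfl fun w _ => ?_
      rw [← Finset.sum_neg_distrib]
      exact Finset.sum_congr rfl fun a _ => hanti a w
    linarith
  -- the "boundary" part dominates the edge increment
  have houter_nonneg : ∀ a ∈ A, ∀ w ∈ ((Nb_finite n a).toFinset).filter (fun w => w ∉ A),
      (0:ℝ) ≤ u a - u w := by
    intro a ha w hw
    rw [Finset.mem_filter, (Nb_finite n a).mem_toFinset] at hw
    have hwV : w ∈ V n := (adj_mem_V hw.1).2
    have hwle : u w ≤ t := by
      by_contra hcon
      exact hw.2 ((hmemA w).2 ⟨hwV, lt_of_not_ge hcon⟩)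
    have := ((hmemA a).1 ha).2
    linarith
  have hxA : x ∈ A := (hmemA x).2 ⟨hx, ht2⟩
  have hySet : y ∈ ((Nb_finite n x).toFinset).filter (fun w => w ∉ A) := by
    rw [Finset.mem_filter, (Nb_finite n x).mem_toFinset]
    refine ⟨hadj, fun hyA => ?_⟩
    have := ((hmemA y).1 hyA).2
    linarith
  have hSout : u x - u y ≤ ∑ a ∈ A, ∑ w ∈ ((Nb_finite n a).toFinset).filter
      (fun w => w ∉ A), (u a - u w) := by
    have h1 : u x - u y ≤ ∑ w ∈ ((Nb_finite n x).toFinset).filter (fun w => w ∉ A),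
        (u x - u w) := Finset.single_le_sum (houter_nonneg x hxA) hySet
    have h2 : ∑ w ∈ ((Nb_finite n x).toFinset).filter (fun w => w ∉ A), (u x - u w)
        ≤ ∑ a ∈ A, ∑ w ∈ ((Nb_finite n a).toFinset).filter (fun w => w ∉ A),
          (u a - u w) :=
      Finset.single_le_sum (fun a ha => Finset.sum_nonneg (houter_nonneg a ha)) hxA
    linarith
  have hS1 : (0:ℝ) ≤ ∑ a ∈ A, (4 - (((Nb_finite n a).toFinset).card : ℝ)) * u a := by
    refine Finset.sum_nonneg fun a ha => ?_
    have hcard : (((Nb_finite n a).toFinset).card : ℝ) ≤ 4 := by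
      exact_mod_cast card_NF_le n a
    have hua : 0 < u a := lt_trans ht0 ((hmemA a).1 ha).2
    nlinarith
  have hfinal : ∑ a ∈ A, lap n u a =
      (∑ a ∈ A, (4 - (((Nb_finite n a).toFinset).card : ℝ)) * u a)
      + ((∑ a ∈ A, ∑ w ∈ ((Nb_finite n a).toFinset).filter (fun w => w ∈ A), (u a - u w))
        + ∑ a ∈ A, ∑ w ∈ ((Nb_finite n a).toFinset).filter (fun w => w ∉ A), (u a - u w)) := by
    rw [Finset.sum_congr rfl hexp, Finset.sum_add_distrib]
    congr 1
    rw [Finset.sum_congr rfl hsplit, Finset.sum_add_distrib]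
  have : u x - u y ≤ 1 := by
    rw [hfinal, hSin] at htot
    linarith
  exact this

end SGaux

/-- There is a constant `c > 0` bounding, uniformly over all levels `n`, the
increment of the Green function along any edge: for `x ∼_n y` and any `z ∈ V_{SG_n}`,
`|g_n(x,z) − g_n(y,z)| ≤ c`. -/
theorem green_edge_increment_uniformly_bounded
    (g : ℕ → Pt → Pt → ℝ) (hg : ∀ n, IsGreen n (g n)) :
    ∃ c : ℝ, 0 < c ∧ ∀ n : ℕ, ∀ x ∈ V n, ∀ y ∈ V n, ∀ z ∈ V n,
      (SG n).Adj x y → |g n x z - g n y z| ≤ c := by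
  refine ⟨1, one_pos, fun n x hx y hy z hz hadj => ?_⟩
  rw [abs_sub_le_iff]
  exact ⟨SGaux.green_diff_le n g hg hx hy hz hadj,
    SGaux.green_diff_le n g hg hy hx hz hadj.symm⟩
end
end
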